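/- arXiv:1407.0499 — 3 statements merged into one kernel-verified Lean document; each statement's English description precedes it below -/
import Mathlib

section
/- For every c ∈ ℝ^d, the integral ∫_{ℝ^d} e^{c·x} f_h(x) dx converges absolutely and equals exp(h cᵀ a₀ c / 2) · (1 + h (b·c + (1/2) cᵀ a c)). -/
open MeasureTheory Matrix
open Real

/-- The density candidate `f_h` from the paper: for `x ∈ ℝ^d`,
`f_h(x) = (2πh)^{-d/2} (det a₀)^{-1/2} exp(-xᵀa₀⁻¹x/(2h))
  (1 - (1/2) a·a₀⁻¹ + b·(a₀⁻¹x) + (1/(2h))(a₀⁻¹x)ᵀ a (a₀⁻¹x))`,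
where `A · B := Tr(ABᵀ)`. -/
noncomputable def fh (d : ℕ) (h : ℝ) (a₀ a : Matrix (Fin d) (Fin d) ℝ) (b : Fin d → ℝ)
    (x : Fin d → ℝ) : ℝ :=
  (2 * Real.pi * h) ^ (-(d : ℝ) / 2) * a₀.det ^ (-(1 : ℝ) / 2) *
    Real.exp (-(x ⬝ᵥ a₀⁻¹.mulVec x) / (2 * h)) *
    (1 - (1 / 2) * (a * a₀⁻¹ᵀ).trace + b ⬝ᵥ a₀⁻¹.mulVec x +
      (1 / (2 * h)) * (a₀⁻¹.mulVec x ⬝ᵥ a.mulVec (a₀⁻¹.mulVec x)))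


lemma g0_int : Integrable (fun x : ℝ => Real.exp (-x ^ 2 / 2)) := by
  have h := integrable_exp_neg_mul_sq (by norm_num : (0:ℝ) < 1/2)
  convert h using 2 with x
  ring_nf

lemma g1_int : Integrable (fun x : ℝ => x * Real.exp (-x ^ 2 / 2)) := by
  have h := integrable_mul_exp_neg_mul_sq (by norm_num : (0:ℝ) < 1/2)
  convert h using 2 with x
  ring_nf

lemma g2_int : Integrable (fun x : ℝ => x ^ 2 * Real.exp (-x ^ 2 / 2)) := by
  have h := integrable_rpow_mul_exp_neg_mul_sq (by norm_num : (0:ℝ) < 1/2)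
    (by norm_num : (-1:ℝ) < 2)
  have e : (fun x : ℝ => x ^ 2 * Real.exp (-x ^ 2 / 2))
      = fun x : ℝ => x ^ (2:ℝ) * Real.exp (-(1/2) * x ^ 2) := by
    funext x
    rw [show (x:ℝ) ^ (2:ℝ) = x ^ (2:ℕ) by
      rw [← Real.rpow_natCast x 2]; norm_num]
    ring_nf
  rw [e]; exact h

lemma g0_val : ∫ x : ℝ, Real.exp (-x ^ 2 / 2) = Real.sqrt (2 * π) := by
  have h := integral_gaussian (1/2 : ℝ)
  rw [show (π / (1/2) : ℝ) = 2 * π by ring] at h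
  rw [← h]
  congr 1 with x
  ring_nf

lemma g1_val : ∫ x : ℝ, x * Real.exp (-x ^ 2 / 2) = 0 := by
  have h := integral_neg_eq_self (fun x : ℝ => x * Real.exp (-x ^ 2 / 2)) volume
  simp only [neg_sq, neg_mul] at h
  rw [integral_neg] at h
  linarith

lemma gtend : Filter.Tendsto (fun x : ℝ => x * Real.exp (-x ^ 2 / 2)) Filter.atTop (nhds 0) := by
  have h := rpow_mul_exp_neg_mul_sq_isLittleO_exp_neg (by norm_num : (0:ℝ) < 1/2) 1
  have h2 : Filter.Tendsto (fun x : ℝ => Real.exp (-(1/2) * x)) Filter.atTop (nhds 0) := by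
    apply Real.tendsto_exp_atBot.comp
    exact (Filter.tendsto_const_mul_atBot_of_neg (by norm_num : (-(1/2):ℝ) < 0)).mpr
      Filter.tendsto_id
  have h3 := h.isBigO.trans_tendsto h2
  refine h3.congr' ?_
  filter_upwards [Filter.eventually_ge_atTop (0:ℝ)] with x hx
  rw [Real.rpow_one]
  ring_nf

lemma g2_val : ∫ x : ℝ, x ^ 2 * Real.exp (-x ^ 2 / 2) = Real.sqrt (2 * π) := by
  set f : ℝ → ℝ := fun x => -x * Real.exp (-x ^ 2 / 2) with hf
  set f' : ℝ → ℝ := fun x => x ^ 2 * Real.exp (-x ^ 2 / 2) - Real.exp (-x ^ 2 / 2) with hf'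
  have hderiv : ∀ x : ℝ, HasDerivAt f (f' x) x := by
    intro x
    have h1 : HasDerivAt (fun x : ℝ => -x ^ 2 / 2) (-x) x := by
      have : HasDerivAt (fun x : ℝ => -x ^ 2 / 2) (-((2:ℕ) * x ^ (2 - 1)) / 2) x := ((hasDerivAt_pow 2 x).neg).div_const 2
      convert this using 1
      push_cast
      ring
    have h2 : HasDerivAt (fun x : ℝ => Real.exp (-x ^ 2 / 2)) (Real.exp (-x ^ 2 / 2) * (-x)) x :=
      h1.exp
    have h3 : HasDerivAt (fun x : ℝ => -x * Real.exp (-x ^ 2 / 2)) (-1 * Real.exp (-x ^ 2 / 2) + -x * (Real.exp (-x ^ 2 / 2) * -x)) x := ((hasDerivAt_id x).neg).mul h2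
    convert h3 using 1
    simp [hf']
    ring
  have hint : IntegrableOn f' (Set.Ioi (0:ℝ)) := (g2_int.sub g0_int).integrableOn
  have hint2 : IntegrableOn f' (Set.Iic (0:ℝ)) := (g2_int.sub g0_int).integrableOn
  have htop : Filter.Tendsto f Filter.atTop (nhds 0) := by
    have := gtend.neg
    simpa [hf, neg_mul] using this
  have hbot : Filter.Tendsto f Filter.atBot (nhds 0) := by
    have h1 : Filter.Tendsto (fun x : ℝ => f (-x)) Filter.atTop (nhds 0) := by
      have : (fun x : ℝ => f (-x)) = fun x : ℝ => x * Real.exp (-x ^ 2 / 2) := by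
        funext x; simp [hf]
      rw [this]; exact gtend
    have := h1.comp (Filter.tendsto_neg_atBot_atTop : Filter.Tendsto (fun x : ℝ => -x) Filter.atBot Filter.atTop)
    simpa [Function.comp_def] using this
  have I1 : ∫ x in Set.Ioi (0:ℝ), f' x = 0 - f 0 :=
    integral_Ioi_of_hasDerivAt_of_tendsto' (fun x _ => hderiv x) hint htop
  have I2 : ∫ x in Set.Iic (0:ℝ), f' x = f 0 - 0 :=
    integral_Iic_of_hasDerivAt_of_tendsto' (fun x _ => hderiv x) hint2 hbot
  have I3 : ∫ x : ℝ, f' x = 0 := by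
    rw [← intervalIntegral.integral_Iic_add_Ioi hint2 hint, I1, I2]; ring
  have I4 : ∫ x : ℝ, f' x = (∫ x : ℝ, x ^ 2 * Real.exp (-x ^ 2 / 2)) - ∫ x : ℝ, Real.exp (-x ^ 2 / 2) := by
    simp only [hf']
    exact integral_sub g2_int g0_int
  rw [I4, g0_val] at I3
  linarith

lemma expprod {d : ℕ} (z : Fin d → ℝ) :
    Real.exp (-(z ⬝ᵥ z) / 2) = ∏ i, Real.exp (-(z i) ^ 2 / 2) := by
  rw [← Real.exp_sum]
  congr 1
  rw [dotProduct]
  rw [show ∑ i, -(z i) ^ 2 / 2 = ∑ i, -(z i * z i) / 2 from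
    Finset.sum_congr rfl fun i _ => by ring]
  rw [← Finset.sum_div]
  rw [← Finset.sum_neg_distrib]

lemma pi0 (d : ℕ) : Integrable (fun z : Fin d → ℝ => Real.exp (-(z ⬝ᵥ z) / 2)) ∧
    ∫ z : Fin d → ℝ, Real.exp (-(z ⬝ᵥ z) / 2) = Real.sqrt (2 * π) ^ d := by
  have e : (fun z : Fin d → ℝ => Real.exp (-(z ⬝ᵥ z) / 2))
      = fun z => ∏ i, Real.exp (-(z i) ^ 2 / 2) := funext expprod
  constructor
  · rw [e]; exact Integrable.fintype_prod fun i => g0_int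
  · rw [e, integral_fintype_prod_volume_eq_pow (fun t : ℝ => Real.exp (-t ^ 2 / 2)), g0_val]
    simp

lemma pi1 (d : ℕ) (i : Fin d) :
    Integrable (fun z : Fin d → ℝ => z i * Real.exp (-(z ⬝ᵥ z) / 2)) ∧
    ∫ z : Fin d → ℝ, z i * Real.exp (-(z ⬝ᵥ z) / 2) = 0 := by
  classical
  set f : Fin d → ℝ → ℝ := fun k t => (if k = i then t else 1) * Real.exp (-t ^ 2 / 2) with hfdef
  have e : (fun z : Fin d → ℝ => z i * Real.exp (-(z ⬝ᵥ z) / 2)) = fun z => ∏ k, f k (z k) := by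
    funext z
    rw [expprod]
    simp only [hfdef]
    rw [Finset.prod_mul_distrib, Finset.prod_ite_eq' Finset.univ i (fun k => z k)]
    simp
  have hint : ∀ k, Integrable (f k) := by
    intro k
    by_cases hk : k = i
    · simpa [hfdef, hk] using g1_int
    · simpa [hfdef, hk] using g0_int
  constructor
  · rw [e]; exact Integrable.fintype_prod hint
  · rw [e, integral_fintype_prod_volume_eq_prod]
    apply Finset.prod_eq_zero (Finset.mem_univ i)
    simpa [hfdef] using g1_val

lemma pi2 (d : ℕ) (i j : Fin d) :
    Integrable (fun z : Fin d → ℝ => z i * z j * Real.exp (-(z ⬝ᵥ z) / 2)) ∧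
    ∫ z : Fin d → ℝ, z i * z j * Real.exp (-(z ⬝ᵥ z) / 2)
      = if i = j then Real.sqrt (2 * π) ^ d else 0 := by
  classical
  set f : Fin d → ℝ → ℝ :=
    fun k t => (if k = i then t else 1) * (if k = j then t else 1) * Real.exp (-t ^ 2 / 2)
    with hfdef
  have e : (fun z : Fin d → ℝ => z i * z j * Real.exp (-(z ⬝ᵥ z) / 2))
      = fun z => ∏ k, f k (z k) := by
    funext z
    rw [expprod]
    simp only [hfdef]
    rw [Finset.prod_mul_distrib, Finset.prod_mul_distrib,
      Finset.prod_ite_eq' Finset.univ i (fun k => z k),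
      Finset.prod_ite_eq' Finset.univ j (fun k => z k)]
    simp
  have hsq : (fun x : ℝ => x ^ 2 * Real.exp (-x ^ 2 / 2))
      = fun x : ℝ => x * x * Real.exp (-x ^ 2 / 2) := by
    funext x; ring_nf
  have hint : ∀ k, Integrable (f k) := by
    intro k
    simp only [hfdef]
    by_cases hki : k = i
    · subst hki
      by_cases hkj : k = j
      · subst hkj
        simp only [if_pos rfl]
        have h2 := g2_int
        rw [hsq] at h2
        exact h2
      · simpa [hkj] using g1_int
    · by_cases hkj : k = j
      · subst hkj
        simpa [hki] using g1_int
      · simpa [hki, hkj] using g0_int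
  refine ⟨by rw [e]; exact Integrable.fintype_prod hint, ?_⟩
  rw [e, integral_fintype_prod_volume_eq_prod]
  by_cases hij : i = j
  · subst hij
    rw [if_pos rfl]
    have hfi : ∀ k : Fin d, ∫ t : ℝ, f k t = Real.sqrt (2 * π) := by
      intro k
      simp only [hfdef]
      by_cases hk : k = i
      · subst hk
        simp only [if_pos rfl]
        have h2 := g2_val
        rw [hsq] at h2
        exact h2
      · simpa [hk] using g0_val
    simp only [hfi, Finset.prod_const, Finset.card_univ, Fintype.card_fin]
  · rw [if_neg hij]
    apply Finset.prod_eq_zero (Finset.mem_univ i)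
    simpa [hfdef, hij] using g1_val

lemma gauss_poly (d : ℕ) (α : ℝ) (v : Fin d → ℝ) (M : Matrix (Fin d) (Fin d) ℝ) :
    Integrable (fun z : Fin d → ℝ =>
      Real.exp (-(z ⬝ᵥ z) / 2) * (α + v ⬝ᵥ z + z ⬝ᵥ M.mulVec z)) ∧
    ∫ z : Fin d → ℝ, Real.exp (-(z ⬝ᵥ z) / 2) * (α + v ⬝ᵥ z + z ⬝ᵥ M.mulVec z)
      = Real.sqrt (2 * π) ^ d * (α + M.trace) := by
  classical
  have expand : (fun z : Fin d → ℝ =>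
      Real.exp (-(z ⬝ᵥ z) / 2) * (α + v ⬝ᵥ z + z ⬝ᵥ M.mulVec z))
      = fun z => α * Real.exp (-(z ⬝ᵥ z) / 2)
        + (∑ i, v i * (z i * Real.exp (-(z ⬝ᵥ z) / 2)))
        + ∑ i, ∑ j, M i j * (z i * z j * Real.exp (-(z ⬝ᵥ z) / 2)) := by
    funext z
    simp only [dotProduct, mulVec]
    rw [mul_add, mul_add]
    congr 1
    · congr 1
      · ring
      · rw [Finset.mul_sum]
        exact Finset.sum_congr rfl fun i _ => by ring
    · rw [Finset.mul_sum]
      refine Finset.sum_congr rfl fun i _ => ?_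
      rw [← mul_assoc, Finset.mul_sum]
      exact Finset.sum_congr rfl fun j _ => by ring
  have IA : Integrable (fun z : Fin d → ℝ => α * Real.exp (-(z ⬝ᵥ z) / 2)) :=
    (pi0 d).1.const_mul α
  have IB : Integrable (fun z : Fin d → ℝ =>
      ∑ i, v i * (z i * Real.exp (-(z ⬝ᵥ z) / 2))) :=
    integrable_finset_sum _ fun i _ => ((pi1 d i).1.const_mul (v i))
  have IC : Integrable (fun z : Fin d → ℝ =>
      ∑ i, ∑ j, M i j * (z i * z j * Real.exp (-(z ⬝ᵥ z) / 2))) :=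
    integrable_finset_sum _ fun i _ =>
      integrable_finset_sum _ fun j _ => ((pi2 d i j).1.const_mul (M i j))
  constructor
  · rw [expand]
    exact Integrable.add (Integrable.add IA IB) IC
  · have IAB : Integrable (fun z : Fin d → ℝ =>
        α * Real.exp (-(z ⬝ᵥ z) / 2)
          + ∑ i, v i * (z i * Real.exp (-(z ⬝ᵥ z) / 2))) := IA.add IB
    rw [expand, integral_add IAB IC, integral_add IA IB]
    rw [integral_const_mul, (pi0 d).2]
    rw [integral_finset_sum _ fun i _ => ((pi1 d i).1.const_mul (v i))]
    rw [integral_finset_sum _ fun i _ =>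
      integrable_finset_sum _ fun j _ => ((pi2 d i j).1.const_mul (M i j))]
    rw [Finset.sum_congr rfl fun i (_ : i ∈ Finset.univ) =>
      integral_finset_sum Finset.univ fun j _ => ((pi2 d i j).1.const_mul (M i j))]
    have hB : ∑ i, ∫ z : Fin d → ℝ, v i * (z i * Real.exp (-(z ⬝ᵥ z) / 2)) = 0 := by
      refine Finset.sum_eq_zero fun i _ => ?_
      rw [integral_const_mul, (pi1 d i).2, mul_zero]
    have hC : ∑ i, ∑ j, ∫ z : Fin d → ℝ,
        M i j * (z i * z j * Real.exp (-(z ⬝ᵥ z) / 2))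
        = M.trace * Real.sqrt (2 * π) ^ d := by
      have : ∀ i j : Fin d, ∫ z : Fin d → ℝ,
          M i j * (z i * z j * Real.exp (-(z ⬝ᵥ z) / 2))
          = M i j * (if i = j then Real.sqrt (2 * π) ^ d else 0) := by
        intro i j
        rw [integral_const_mul, (pi2 d i j).2]
      simp only [this, mul_ite, mul_zero]
      rw [Finset.sum_congr rfl fun i (_ : i ∈ Finset.univ) =>
        Finset.sum_ite_eq Finset.univ i (fun j => M i j * Real.sqrt (2 * π) ^ d)]
      simp only [Finset.mem_univ, if_true]
      rw [← Finset.sum_mul]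
      congr 1
    rw [hB, hC]
    ring


lemma cov {d : ℕ} (R : Matrix (Fin d) (Fin d) ℝ) (hR : R.det ≠ 0) (x₀ : Fin d → ℝ)
    (F : (Fin d → ℝ) → ℝ) (hF : Continuous F) :
    (Integrable F (volume : Measure (Fin d → ℝ)) ↔
      Integrable (fun z : Fin d → ℝ => F (R.mulVec z + x₀)) (volume : Measure (Fin d → ℝ))) ∧
    ∫ x : Fin d → ℝ, F x = |R.det| * ∫ z : Fin d → ℝ, F (R.mulVec z + x₀) := by
  classical
  set G : (Fin d → ℝ) → ℝ := fun y => F (y + x₀) with hG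
  have hGc : Continuous G := hF.comp (continuous_id.add continuous_const)
  have hmap := Real.map_matrix_volume_pi_eq_smul_volume_pi hR
  have hTc : Continuous (Matrix.toLin' R) := LinearMap.continuous_on_pi _
  have hne : ENNReal.ofReal |R.det⁻¹| ≠ 0 := by
    simp only [ne_eq, ENNReal.ofReal_eq_zero, not_le, abs_pos]
    exact inv_ne_zero hR
  have htop : ENNReal.ofReal |R.det⁻¹| ≠ ⊤ := ENNReal.ofReal_ne_top
  have hcomp : (fun z : Fin d → ℝ => G (R.mulVec z)) =
      fun z : Fin d → ℝ => F (R.mulVec z + x₀) := rfl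
  have hIG : Integrable G (volume : Measure (Fin d → ℝ)) ↔
      Integrable (fun z : Fin d → ℝ => F (R.mulVec z + x₀)) (volume : Measure (Fin d → ℝ)) := by
    rw [← hcomp]
    constructor
    · intro hGint
      have : Integrable G (Measure.map (Matrix.toLin' R) volume) := by
        rw [hmap]
        exact (integrable_smul_measure hne htop).mpr hGint
      have := (integrable_map_measure hGc.aestronglyMeasurable
        hTc.measurable.aemeasurable).mp this
      simpa only [Function.comp_def, Matrix.toLin'_apply] using this
    · intro hGint
      have : Integrable (G ∘ (Matrix.toLin' R)) volume := by
        simpa only [Function.comp_def, Matrix.toLin'_apply] using hGint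
      have := (integrable_map_measure hGc.aestronglyMeasurable
        hTc.measurable.aemeasurable).mpr this
      rw [hmap] at this
      exact (integrable_smul_measure hne htop).mp this
  have hIF : Integrable F (volume : Measure (Fin d → ℝ)) ↔
      Integrable G (volume : Measure (Fin d → ℝ)) := by
    constructor
    · intro hFi
      exact hFi.comp_add_right x₀
    · intro hGi
      have := hGi.comp_add_right (-x₀)
      simpa [hG, add_assoc] using this
  have hval : ∫ x : Fin d → ℝ, F x = |R.det| * ∫ z : Fin d → ℝ, F (R.mulVec z + x₀) := by
    have h1 : ∫ x : Fin d → ℝ, F x = ∫ y : Fin d → ℝ, G y := by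
      rw [hG]
      exact (integral_add_right_eq_self F x₀).symm
    have h2 : ∫ y : Fin d → ℝ, G y ∂(Measure.map (Matrix.toLin' R) volume)
        = ∫ z : Fin d → ℝ, F (R.mulVec z + x₀) := by
      rw [integral_map hTc.measurable.aemeasurable hGc.aestronglyMeasurable]
      simp only [Matrix.toLin'_apply]
      rfl
    have h3 : ∫ y : Fin d → ℝ, G y ∂(Measure.map (Matrix.toLin' R) volume)
        = |R.det|⁻¹ * ∫ y : Fin d → ℝ, G y := by
      rw [hmap, integral_smul_measure, ENNReal.toReal_ofReal (abs_nonneg _), abs_inv]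
      simp [smul_eq_mul]
    rw [h1, ← h2, h3, ← mul_assoc, mul_inv_cancel₀ (abs_ne_zero.mpr hR), one_mul]
  exact ⟨hIF.trans hIG, hval⟩

lemma mv_dp {d : ℕ} (A : Matrix (Fin d) (Fin d) ℝ) (x u : Fin d → ℝ) :
    A.mulVec x ⬝ᵥ u = x ⬝ᵥ Aᵀ.mulVec u := by
  rw [dotProduct_mulVec, vecMul_transpose]

lemma dp_cont {d : ℕ} (f g : (Fin d → ℝ) → (Fin d → ℝ)) (hf : Continuous f)
    (hg : Continuous g) : Continuous fun x => f x ⬝ᵥ g x := by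
  simp only [dotProduct]
  exact continuous_finset_sum _ fun i _ =>
    ((continuous_apply i).comp hf).mul ((continuous_apply i).comp hg)

lemma mv_cont {d : ℕ} (A : Matrix (Fin d) (Fin d) ℝ) :
    Continuous fun x : Fin d → ℝ => A.mulVec x := by
  refine continuous_pi fun i => ?_
  simp only [mulVec, dotProduct]
  exact continuous_finset_sum _ fun j _ => continuous_const.mul (continuous_apply j)

/-- For every `c ∈ ℝ^d`, the integral `∫_{ℝ^d} e^{c·x} f_h(x) dx` converges absolutely and
equals `exp(h cᵀ a₀ c / 2) · (1 + h (b·c + (1/2) cᵀ a c))`. -/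
theorem stmt5 (d : ℕ) (hd : 1 ≤ d) (h : ℝ) (hh : 0 < h)
    (σ₀ : Matrix (Fin d) (Fin d) ℝ) (hσ₀ : IsUnit σ₀)
    (a₀ a : Matrix (Fin d) (Fin d) ℝ) (ha₀ : a₀ = σ₀ * σ₀ᵀ)
    (ha : a.PosSemidef) (b : Fin d → ℝ) (c : Fin d → ℝ) :
    Integrable (fun x : Fin d → ℝ => Real.exp (c ⬝ᵥ x) * fh d h a₀ a b x)
        (volume : Measure (Fin d → ℝ)) ∧
      ∫ x : Fin d → ℝ, Real.exp (c ⬝ᵥ x) * fh d h a₀ a b x =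
        Real.exp (h * (c ⬝ᵥ a₀.mulVec c) / 2) *
          (1 + h * (b ⬝ᵥ c + (1 / 2) * (c ⬝ᵥ a.mulVec c))) := by
  classical
  have hdS : IsUnit σ₀.det := (Matrix.isUnit_iff_isUnit_det σ₀).mp hσ₀
  have hdS0 : σ₀.det ≠ 0 := hdS.ne_zero
  have hs : 0 < Real.sqrt h := Real.sqrt_pos.mpr hh
  set s := Real.sqrt h with hsdef
  have hs2 : s * s = h := Real.mul_self_sqrt hh.le
  have haT : aᵀ = a := ha.1
  have ha₀T : a₀ᵀ = a₀ := by rw [ha₀, transpose_mul, transpose_transpose]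
  have hda₀ : a₀.det = σ₀.det ^ 2 := by rw [ha₀, det_mul, det_transpose]; ring
  have hda₀0 : a₀.det ≠ 0 := by rw [hda₀]; exact pow_ne_zero 2 hdS0
  have hda₀u : IsUnit a₀.det := isUnit_iff_ne_zero.mpr hda₀0
  set W : Matrix (Fin d) (Fin d) ℝ := σ₀⁻¹ᵀ with hW
  have hWT : Wᵀ = σ₀⁻¹ := transpose_transpose _
  have hWa : W = σ₀ᵀ⁻¹ := transpose_nonsing_inv σ₀
  have ha₀inv : a₀⁻¹ = W * σ₀⁻¹ := by rw [ha₀, Matrix.mul_inv_rev, hWa]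
  have hinv_symm : a₀⁻¹ᵀ = a₀⁻¹ := by rw [transpose_nonsing_inv, ha₀T]
  have hSinvS : σ₀⁻¹ * σ₀ = 1 := nonsing_inv_mul σ₀ hdS
  have hStW : σ₀ᵀ * W = 1 := by rw [hW, ← transpose_mul, hSinvS, transpose_one]
  have ha₀W : a₀ * W = σ₀ := by rw [ha₀, mul_assoc, hStW, mul_one]
  set R : Matrix (Fin d) (Fin d) ℝ := s • σ₀ with hRdef
  have hdetR : R.det = s ^ d * σ₀.det := by rw [hRdef, det_smul, Fintype.card_fin]
  have hdetR0 : R.det ≠ 0 := by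
    rw [hdetR]; exact mul_ne_zero (pow_ne_zero _ hs.ne') hdS0
  set x₀ : Fin d → ℝ := h • a₀.mulVec c with hx₀
  -- image of the inverse covariance applied to the shifted point
  have hTz : ∀ z : Fin d → ℝ,
      a₀⁻¹.mulVec (R.mulVec z + x₀) = s • W.mulVec z + h • c := by
    intro z
    have h1 : a₀⁻¹ * R = s • W := by
      rw [hRdef, Matrix.mul_smul, ha₀inv, mul_assoc, hSinvS, mul_one]
    have h2 : a₀⁻¹.mulVec x₀ = h • c := by
      rw [hx₀, mulVec_smul, mulVec_mulVec, nonsing_inv_mul a₀ hda₀u, one_mulVec]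
    rw [mulVec_add, mulVec_mulVec, h1, h2, smul_mulVec]
  -- scalar dot-product identities
  have hzz : ∀ z : Fin d → ℝ, σ₀.mulVec z ⬝ᵥ W.mulVec z = z ⬝ᵥ z := by
    intro z; rw [mv_dp, mulVec_mulVec, hStW, one_mulVec]
  have hcz : ∀ z : Fin d → ℝ, a₀.mulVec c ⬝ᵥ W.mulVec z = c ⬝ᵥ σ₀.mulVec z := by
    intro z; rw [mv_dp, mulVec_mulVec, ha₀T, ha₀W]
  have hWaW : ∀ z : Fin d → ℝ, W.mulVec z ⬝ᵥ a.mulVec (W.mulVec z)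
      = z ⬝ᵥ (σ₀⁻¹ * a * W).mulVec z := by
    intro z; rw [mv_dp, hWT, mulVec_mulVec, mulVec_mulVec, Matrix.mul_assoc]
  have hWac : ∀ z : Fin d → ℝ, W.mulVec z ⬝ᵥ a.mulVec c = (σ₀⁻¹ * a).mulVec c ⬝ᵥ z := by
    intro z; rw [mv_dp, hWT, mulVec_mulVec, dotProduct_comm]
  have hcaW : ∀ z : Fin d → ℝ, c ⬝ᵥ a.mulVec (W.mulVec z) = (σ₀⁻¹ * a).mulVec c ⬝ᵥ z := by
    intro z
    have h1 := mv_dp ((a * W)ᵀ) c z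
    rw [transpose_transpose] at h1
    rw [mulVec_mulVec, ← h1, transpose_mul, hWT, haT]
  have hbW : ∀ z : Fin d → ℝ, b ⬝ᵥ W.mulVec z = σ₀⁻¹.mulVec b ⬝ᵥ z := by
    intro z; rw [dotProduct_comm, mv_dp, hWT, dotProduct_comm]
  -- the data for the Gaussian polynomial integral
  set α : ℝ := 1 - (1/2) * (a * a₀⁻¹ᵀ).trace + h * (b ⬝ᵥ c)
    + (h/2) * (c ⬝ᵥ a.mulVec c) with hα
  set v : Fin d → ℝ := s • (σ₀⁻¹.mulVec b + (σ₀⁻¹ * a).mulVec c) with hv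
  set M₂ : Matrix (Fin d) (Fin d) ℝ := (1/2 : ℝ) • (σ₀⁻¹ * a * W) with hM₂
  set K : ℝ := (2 * Real.pi * h) ^ (-(d : ℝ) / 2) * a₀.det ^ (-(1 : ℝ) / 2)
    * Real.exp (h * (c ⬝ᵥ a₀.mulVec c) / 2) with hK
  set F : (Fin d → ℝ) → ℝ := fun x => Real.exp (c ⬝ᵥ x) * fh d h a₀ a b x with hFdef
  have key : ∀ z : Fin d → ℝ, F (R.mulVec z + x₀)
      = K * (Real.exp (-(z ⬝ᵥ z) / 2) * (α + v ⬝ᵥ z + z ⬝ᵥ M₂.mulVec z)) := by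
    intro z
    simp only [hFdef, fh]
    rw [hTz z]
    rw [show R.mulVec z + x₀ = s • σ₀.mulVec z + h • a₀.mulVec c by
      rw [hRdef, hx₀, smul_mulVec]]
    simp only [dotProduct_add, add_dotProduct, dotProduct_smul, smul_dotProduct,
      mulVec_add, mulVec_smul, smul_eq_mul, hv, hM₂, smul_mulVec, Pi.smul_apply,
      Pi.add_apply]
    rw [hzz, hcz, hWaW, hWac, hcaW, hbW]
    rw [dotProduct_comm (σ₀.mulVec z) c, dotProduct_comm (a₀.mulVec c) c]
    have hs0 : s ≠ 0 := hs.ne'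
    have hh0 : h ≠ 0 := hh.ne'
    set X := c ⬝ᵥ σ₀ *ᵥ z with hX
    set Y := c ⬝ᵥ a₀ *ᵥ c with hY
    set Z := z ⬝ᵥ z with hZ
    set Q := z ⬝ᵥ (σ₀⁻¹ * a * W) *ᵥ z with hQ
    set L1 := σ₀⁻¹ *ᵥ b ⬝ᵥ z with hL1
    set L2 := (σ₀⁻¹ * a) *ᵥ c ⬝ᵥ z with hL2
    set B := b ⬝ᵥ c with hB
    set CC := c ⬝ᵥ a *ᵥ c with hCC
    set tr := (a * a₀⁻¹ᵀ).trace with htr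
    simp only [hK]
    have harg : (s * X + h * Y) + (-(s * (s * Z + h * X) + h * (s * X + h * Y)) / (2 * h))
        = h * Y / 2 + (-Z / 2) := by
      rw [← hs2]; field_simp; ring
    have hE : Real.exp (s * X + h * Y) *
        Real.exp (-(s * (s * Z + h * X) + h * (s * X + h * Y)) / (2 * h))
        = Real.exp (h * Y / 2) * Real.exp (-Z / 2) := by
      rw [← Real.exp_add, ← Real.exp_add, harg]
    have hpoly : 1 - 1 / 2 * tr + (s * L1 + h * B) +
        1 / (2 * h) * (s * (s * Q + h * L2) + h * (s * L2 + h * CC))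
        = α + s * (L1 + L2) + 1 / 2 * Q := by
      rw [hα, ← hs2]; field_simp; ring
    rw [hpoly]
    linear_combination ((2 * Real.pi * h) ^ (-(d : ℝ) / 2) * a₀.det ^ (-(1 : ℝ) / 2) *
      (α + s * (L1 + L2) + 1 / 2 * Q)) * hE
  -- continuity of the integrand
  have hFc : Continuous F := by
    simp only [hFdef, fh]
    have hE2 : Continuous fun x : Fin d → ℝ =>
        Real.exp (-(x ⬝ᵥ a₀⁻¹.mulVec x) / (2 * h)) :=
      Real.continuous_exp.comp
        (((dp_cont id (fun x => a₀⁻¹.mulVec x) continuous_id (mv_cont _)).neg).div_const _)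
    have hB : Continuous fun x : Fin d → ℝ => b ⬝ᵥ a₀⁻¹.mulVec x :=
      dp_cont (fun _ => b) (fun x => a₀⁻¹.mulVec x) continuous_const (mv_cont _)
    have hQ : Continuous fun x : Fin d → ℝ =>
        1 / (2 * h) * (a₀⁻¹.mulVec x ⬝ᵥ a.mulVec (a₀⁻¹.mulVec x)) :=
      continuous_const.mul (dp_cont (fun x => a₀⁻¹.mulVec x)
        (fun x => a.mulVec (a₀⁻¹.mulVec x)) (mv_cont _) ((mv_cont a).comp (mv_cont _)))
    exact Continuous.mul (Real.continuous_exp.comp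
        (dp_cont (fun _ => c) id continuous_const continuous_id))
      (Continuous.mul (Continuous.mul continuous_const hE2)
        (Continuous.add (Continuous.add continuous_const hB) hQ))
  obtain ⟨hcov_iff, hcov_val⟩ := cov R hdetR0 x₀ F hFc
  obtain ⟨hgint, hgval⟩ := gauss_poly d α v M₂
  have hptF : (fun z : Fin d → ℝ => F (R.mulVec z + x₀))
      = fun z : Fin d → ℝ => K * (Real.exp (-(z ⬝ᵥ z) / 2) * (α + v ⬝ᵥ z + z ⬝ᵥ M₂.mulVec z)) :=
    funext key
  have hintT : Integrable (fun z : Fin d → ℝ => F (R.mulVec z + x₀)) := by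
    rw [hptF]; exact hgint.const_mul K
  refine ⟨hcov_iff.mpr hintT, ?_⟩
  rw [hcov_val, hptF, integral_const_mul, hgval]
  -- final numerics
  have htrM : M₂.trace = 1 / 2 * (a * a₀⁻¹ᵀ).trace := by
    rw [hM₂, Matrix.trace_smul, Matrix.trace_mul_cycle, Matrix.trace_mul_comm,
      ← ha₀inv, hinv_symm, smul_eq_mul]
  have hαtr : α + M₂.trace = 1 + h * (b ⬝ᵥ c + 1 / 2 * (c ⬝ᵥ a.mulVec c)) := by
    rw [htrM, hα]; ring
  rw [hαtr]
  have habs : |R.det| = s ^ d * |σ₀.det| := by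
    rw [hdetR, abs_mul, abs_pow, abs_of_nonneg (Real.sqrt_nonneg h)]
  have hdrpow : a₀.det ^ (-(1 : ℝ) / 2) = |σ₀.det|⁻¹ := by
    rw [hda₀, show σ₀.det ^ 2 = |σ₀.det| ^ 2 from (sq_abs _).symm,
      ← Real.rpow_natCast |σ₀.det| 2, ← Real.rpow_mul (abs_nonneg _)]
    norm_num
    exact Real.rpow_neg_one _
  have h2πh : (0:ℝ) < 2 * Real.pi * h := by positivity
  have hpow : Real.sqrt (2 * Real.pi) ^ d * s ^ d = (2 * Real.pi * h) ^ ((d : ℝ) / 2) := by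
    rw [← mul_pow, hsdef, ← Real.sqrt_mul (by positivity : (0:ℝ) ≤ 2 * Real.pi) h,
      Real.sqrt_eq_rpow, ← Real.rpow_natCast ((2 * Real.pi * h) ^ ((1:ℝ)/2)) d,
      ← Real.rpow_mul h2πh.le]
    congr 1
    ring
  have hP1 : (2 * Real.pi * h) ^ (-(d : ℝ) / 2)
      * (Real.sqrt (2 * Real.pi) ^ d * s ^ d) = 1 := by
    rw [hpow, ← Real.rpow_add h2πh, show -(d:ℝ)/2 + (d:ℝ)/2 = 0 by ring, Real.rpow_zero]
  have hD1 : |σ₀.det| * |σ₀.det|⁻¹ = 1 :=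
    mul_inv_cancel₀ (abs_ne_zero.mpr hdS0)
  rw [habs, hK, hdrpow]
  set T := 1 + h * (b ⬝ᵥ c + 1 / 2 * (c ⬝ᵥ a.mulVec c)) with hT
  set E := Real.exp (h * (c ⬝ᵥ a₀.mulVec c) / 2) with hE
  calc s ^ d * |σ₀.det| * ((2 * Real.pi * h) ^ (-(d : ℝ) / 2) * |σ₀.det|⁻¹ * E
        * (Real.sqrt (2 * Real.pi) ^ d * T))
      = (|σ₀.det| * |σ₀.det|⁻¹)
        * ((2 * Real.pi * h) ^ (-(d : ℝ) / 2) * (Real.sqrt (2 * Real.pi) ^ d * s ^ d))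
        * (E * T) := by ring
    _ = E * T := by rw [hD1, hP1]; ring
end

section
/- For every h₀ > 0, setting C₁ := E[ |σ₀ N|³ ( 1 + √h₀ |b · ((σ₀ᵀ)⁻¹ N)| + (1/2) |a · ((σ₀ᵀ)⁻¹ (N Nᵀ − I_d) σ₀⁻¹)| ) ], where N is a standard Gaussian random vector in ℝ^d (mean 0, identity covariance), one has ∫_{ℝ^d} |x|³ |f_h(x)| dx ≤ C₁ h^{3/2} for every 0 < h ≤ h₀; moreover C₁ < ∞ and C₁ does not depend on h. -/
open MeasureTheory Matrix

/-- The standard Gaussian measure on `ℝ^d` (mean `0`, identity covariance),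
realized as a product of one-dimensional standard Gaussians. -/
noncomputable def stdGaussianPi (d : ℕ) : Measure (Fin d → ℝ) :=
  Measure.pi fun _ => ProbabilityTheory.gaussianReal 0 1

/-- The Euclidean norm on `ℝ^d`. -/
noncomputable def enorm {d : ℕ} (v : Fin d → ℝ) : ℝ :=
  Real.sqrt (∑ i, v i ^ 2)

/-- The integrand defining the constant
`C₁ := E[ |σ₀N|³ (1 + √h₀ |b·((σ₀ᵀ)⁻¹N)| + (1/2)|a·((σ₀ᵀ)⁻¹(NNᵀ − I)σ₀⁻¹)|) ]`,
where `N` is a standard Gaussian vector and `A · B := Tr(ABᵀ)`. -/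
noncomputable def C₁fun (d : ℕ) (σ₀ a : Matrix (Fin d) (Fin d) ℝ) (b : Fin d → ℝ)
    (h₀ : ℝ) (y : Fin d → ℝ) : ℝ :=
  _root_.enorm (σ₀.mulVec y) ^ 3 *
    (1 + Real.sqrt h₀ * |b ⬝ᵥ (σ₀ᵀ)⁻¹.mulVec y| +
      (1 / 2) * |(a * ((σ₀ᵀ)⁻¹ * (vecMulVec y y - 1) * σ₀⁻¹)ᵀ).trace|)

/- ################# auxiliary material ################# -/

open ENNReal ProbabilityTheory in
lemma aux_lintegral_pi_prod {n : ℕ} {α : Type*} [MeasurableSpace α] (μ : Measure α)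
    [SigmaFinite μ] (f : Fin n → α → ℝ≥0∞) (hf : ∀ i, Measurable (f i)) :
    ∫⁻ x : Fin n → α, ∏ i, f i (x i) ∂(Measure.pi fun _ => μ) = ∏ i, ∫⁻ t, f i t ∂μ := by
  induction n with
  | zero => simp
  | succ n ih =>
    have hp := (measurePreserving_piFinSuccAbove (fun _ : Fin (n+1) => μ) 0).symm
    rw [← hp.lintegral_comp_emb (MeasurableEquiv.measurableEmbedding _)]
    simp_rw [MeasurableEquiv.piFinSuccAbove_symm_apply, Fin.insertNthEquiv,
      Fin.prod_univ_succ, Fin.insertNth_zero]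
    simp only [Fin.zero_succAbove, Function.comp_def, Fin.cons_zero, Fin.cons_succ,
      Equiv.coe_fn_mk, cast_eq]
    have h2 : Measurable fun z : Fin n → α => ∏ i, f i.succ (z i) :=
      Finset.measurable_prod _ fun i _ => (hf i.succ).comp (measurable_pi_apply i)
    rw [lintegral_prod_mul (hf 0).aemeasurable h2.aemeasurable,
      ih (fun i => f i.succ) (fun i => hf i.succ)]

open ENNReal ProbabilityTheory in
lemma aux_stdGaussianPi_eq (d : ℕ) :
    stdGaussianPi d =
      (volume : Measure (Fin d → ℝ)).withDensity
        (fun y => ∏ i, gaussianPDF 0 1 (y i)) := by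
  have h1 : ∀ _i : Fin d, gaussianReal 0 1 = volume.withDensity (gaussianPDF 0 1) :=
    fun _ => gaussianReal_of_var_ne_zero 0 one_ne_zero
  refine (Measure.pi_eq fun s hs => ?_)
  rw [withDensity_apply _ (MeasurableSet.univ_pi hs),
    ← lintegral_indicator (MeasurableSet.univ_pi hs)]
  have key : ∀ y : Fin d → ℝ,
      (Set.univ.pi s).indicator (fun y => ∏ i, gaussianPDF 0 1 (y i)) y
        = ∏ i, (s i).indicator (gaussianPDF 0 1) (y i) := by
    intro y
    by_cases hy : y ∈ Set.univ.pi s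
    · rw [Set.indicator_of_mem hy]
      exact Finset.prod_congr rfl fun i _ =>
        (Set.indicator_of_mem (hy i (Set.mem_univ i)) _).symm
    · rw [Set.indicator_of_notMem hy]
      rw [Set.mem_univ_pi] at hy
      push_neg at hy
      obtain ⟨i, hi⟩ := hy
      exact (Finset.prod_eq_zero (Finset.mem_univ i)
        (Set.indicator_of_notMem hi _)).symm
  simp_rw [key, volume_pi]
  rw [aux_lintegral_pi_prod volume _ (fun i => (measurable_gaussianPDF 0 1).indicator (hs i))]
  refine Finset.prod_congr rfl fun i _ => ?_
  rw [h1 i, withDensity_apply _ (hs i), ← lintegral_indicator (hs i)]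

section aux
variable {d : ℕ}

lemma aux_mulVec_dot (A : Matrix (Fin d) (Fin d) ℝ) (x w : Fin d → ℝ) :
    (A.mulVec x) ⬝ᵥ w = x ⬝ᵥ (Aᵀ.mulVec w) := by
  simp only [dotProduct, mulVec, Matrix.transpose_apply, Finset.sum_mul, Finset.mul_sum]
  rw [Finset.sum_comm]
  exact Finset.sum_congr rfl fun i _ => Finset.sum_congr rfl fun j _ => by ring

lemma aux_enorm_smul {s : ℝ} (hs : 0 ≤ s) (w : Fin d → ℝ) :
    _root_.enorm (s • w) = s * _root_.enorm w := by
  unfold _root_.enorm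
  have : ∑ i, (s • w) i ^ 2 = s ^ 2 * ∑ i, w i ^ 2 := by
    simp [mul_pow, Finset.mul_sum]
  rw [this, Real.sqrt_mul (sq_nonneg s), Real.sqrt_sq hs]

lemma aux_enorm_nonneg (w : Fin d → ℝ) : 0 ≤ _root_.enorm w := Real.sqrt_nonneg _

lemma aux_trace_vecMulVec (a : Matrix (Fin d) (Fin d) ℝ) (v : Fin d → ℝ) :
    (a * (vecMulVec v v)ᵀ).trace = v ⬝ᵥ a.mulVec v := by
  simp only [Matrix.trace, Matrix.diag, Matrix.mul_apply, Matrix.transpose_apply,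
    Matrix.vecMulVec_apply, dotProduct, mulVec, Finset.mul_sum]
  exact Finset.sum_congr rfl fun i _ => Finset.sum_congr rfl fun j _ => by ring

lemma aux_mul_vecMulVec_mul (B C : Matrix (Fin d) (Fin d) ℝ) (y : Fin d → ℝ) :
    B * vecMulVec y y * C = vecMulVec (B.mulVec y) (Cᵀ.mulVec y) := by
  ext i j
  simp only [Matrix.mul_apply, Matrix.vecMulVec_apply, mulVec, dotProduct,
    Matrix.transpose_apply, Finset.sum_mul, Finset.mul_sum]
  exact Finset.sum_congr rfl fun k _ => Finset.sum_congr rfl fun l _ => by ring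

open ProbabilityTheory in
lemma aux_gauss_prod (y : Fin d → ℝ) : ∏ i : Fin d, gaussianPDFReal 0 1 (y i)
    = (2*Real.pi) ^ (-(d:ℝ)/2) * Real.exp (-(y ⬝ᵥ y)/2) := by
  have hpdf : ∀ t : ℝ, gaussianPDFReal 0 1 t
      = (Real.sqrt (2*Real.pi))⁻¹ * Real.exp (-(t^2)/2) := by
    intro t
    simp [gaussianPDFReal]
  simp_rw [hpdf]
  rw [Finset.prod_mul_distrib, Finset.prod_const, ← Real.exp_sum, Finset.card_univ,
    Fintype.card_fin]
  congr 1
  · rw [Real.sqrt_eq_rpow, ← Real.rpow_neg (by positivity),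
      ← Real.rpow_natCast ((2*Real.pi) ^ (-((1:ℝ)/2))) d, ← Real.rpow_mul (by positivity)]
    congr 1; ring
  · congr 1
    rw [dotProduct]
    rw [← Finset.sum_div, ← Finset.sum_neg_distrib]
    exact congrArg (· / 2) (Finset.sum_congr rfl fun i _ => by ring)

open ProbabilityTheory in
lemma aux_key_eq (σ₀ a₀ a : Matrix (Fin d) (Fin d) ℝ) (hσ₀ : IsUnit σ₀)
    (ha₀ : a₀ = σ₀ * σ₀ᵀ) (b : Fin d → ℝ) {h : ℝ} (hh : 0 < h) (y : Fin d → ℝ) :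
    |(Real.sqrt h • σ₀).det| *
        (_root_.enorm ((Real.sqrt h • σ₀).mulVec y) ^ 3 *
          |fh d h a₀ a b ((Real.sqrt h • σ₀).mulVec y)|)
      = h ^ ((3:ℝ)/2) * ((∏ i, gaussianPDFReal 0 1 (y i)) *
          (_root_.enorm (σ₀.mulVec y) ^ 3 *
            |1 + Real.sqrt h * (b ⬝ᵥ (σ₀ᵀ)⁻¹.mulVec y) +
              (1/2) * (a * ((σ₀ᵀ)⁻¹ * (vecMulVec y y - 1) * σ₀⁻¹)ᵀ).trace|)) := by
  have hdet : IsUnit σ₀.det := (Matrix.isUnit_iff_isUnit_det σ₀).mp hσ₀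
  have hdet0 : σ₀.det ≠ 0 := hdet.ne_zero
  have hdetT : IsUnit σ₀ᵀ.det := by rwa [Matrix.det_transpose]
  set s := Real.sqrt h with hs_def
  have hs : 0 ≤ s := Real.sqrt_nonneg h
  have hs2 : s * s = h := Real.mul_self_sqrt hh.le
  set v := (σ₀ᵀ)⁻¹.mulVec y with hv_def
  set Ty := (s • σ₀).mulVec y with hTy_def
  have hMv : Ty = s • σ₀.mulVec y := smul_mulVec s σ₀ y
  have hB : a₀⁻¹ = (σ₀ᵀ)⁻¹ * σ₀⁻¹ := by rw [ha₀, Matrix.mul_inv_rev]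
  have hA0σ : a₀⁻¹ * σ₀ = (σ₀ᵀ)⁻¹ := by
    rw [hB, mul_assoc, Matrix.nonsing_inv_mul _ hdet, mul_one]
  have hval : a₀⁻¹.mulVec Ty = s • v := by
    rw [hMv, mulVec_smul, mulVec_mulVec, hA0σ]
  have hσv : σ₀.mulVec y ⬝ᵥ v = y ⬝ᵥ y := by
    rw [aux_mulVec_dot, mulVec_mulVec, Matrix.mul_nonsing_inv _ hdetT, one_mulVec]
  have hexp : Ty ⬝ᵥ a₀⁻¹.mulVec Ty = h * (y ⬝ᵥ y) := by
    rw [hval, hMv, smul_dotProduct, dotProduct_smul, smul_eq_mul, smul_eq_mul, hσv,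
      ← mul_assoc, hs2]
  have hb' : b ⬝ᵥ a₀⁻¹.mulVec Ty = s * (b ⬝ᵥ v) := by
    rw [hval, dotProduct_smul, smul_eq_mul]
  have hquad : a₀⁻¹.mulVec Ty ⬝ᵥ a.mulVec (a₀⁻¹.mulVec Ty) = h * (v ⬝ᵥ a.mulVec v) := by
    rw [hval, mulVec_smul, smul_dotProduct, dotProduct_smul, smul_eq_mul, smul_eq_mul,
      ← mul_assoc, hs2]
  have htr : (a * ((σ₀ᵀ)⁻¹ * (vecMulVec y y - 1) * σ₀⁻¹)ᵀ).trace
      = v ⬝ᵥ a.mulVec v - (a * a₀⁻¹ᵀ).trace := by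
    have h1 : (σ₀ᵀ)⁻¹ * (vecMulVec y y - 1) * σ₀⁻¹ = vecMulVec v v - a₀⁻¹ := by
      rw [Matrix.mul_sub, Matrix.sub_mul, mul_one, aux_mul_vecMulVec_mul,
        Matrix.transpose_nonsing_inv, hB, hv_def]
    rw [h1, Matrix.transpose_sub, Matrix.mul_sub, Matrix.trace_sub, aux_trace_vecMulVec]
  have hpoly : 1 - (1/2) * (a * a₀⁻¹ᵀ).trace + b ⬝ᵥ a₀⁻¹.mulVec Ty +
      (1/(2*h)) * (a₀⁻¹.mulVec Ty ⬝ᵥ a.mulVec (a₀⁻¹.mulVec Ty))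
      = 1 + s * (b ⬝ᵥ v) +
        (1/2) * (a * ((σ₀ᵀ)⁻¹ * (vecMulVec y y - 1) * σ₀⁻¹)ᵀ).trace := by
    rw [hb', hquad, htr]
    field_simp
    ring
  have harg : -(Ty ⬝ᵥ a₀⁻¹.mulVec Ty)/(2*h) = -(y ⬝ᵥ y)/2 := by
    rw [hexp]; field_simp
  have hd2 : s ^ d = h ^ ((d:ℝ)/2) := by
    rw [hs_def, Real.sqrt_eq_rpow, ← Real.rpow_natCast (h ^ ((1:ℝ)/2)) d,
      ← Real.rpow_mul hh.le]
    congr 1; ring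
  have hs3 : s ^ 3 = h ^ ((3:ℝ)/2) := by
    rw [hs_def, Real.sqrt_eq_rpow, ← Real.rpow_natCast (h ^ ((1:ℝ)/2)) 3,
      ← Real.rpow_mul hh.le]
    norm_num
  have hdetM : |(s • σ₀).det| = h ^ ((d:ℝ)/2) * |σ₀.det| := by
    rw [Matrix.det_smul, abs_mul, abs_pow, abs_of_nonneg hs, Fintype.card_fin, hd2]
  have hdeta₀ : a₀.det = |σ₀.det| ^ 2 := by
    rw [ha₀, Matrix.det_mul, Matrix.det_transpose, ← sq, sq_abs]
  have hc2 : a₀.det ^ (-(1:ℝ)/2) = |σ₀.det|⁻¹ := by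
    rw [hdeta₀, ← Real.rpow_natCast |σ₀.det| 2, ← Real.rpow_mul (abs_nonneg _),
      show ((2:ℕ):ℝ) * (-(1)/2) = -1 by norm_num, Real.rpow_neg_one]
  have hconst : (2*Real.pi*h) ^ (-(d:ℝ)/2) * a₀.det ^ (-(1:ℝ)/2) * (h ^ ((d:ℝ)/2) * |σ₀.det|)
      = (2*Real.pi) ^ (-(d:ℝ)/2) := by
    rw [Real.mul_rpow (by positivity) hh.le, hc2]
    have h1 : h ^ (-(d:ℝ)/2) * h ^ ((d:ℝ)/2) = 1 := by
      rw [← Real.rpow_add hh, show -(d:ℝ)/2 + (d:ℝ)/2 = 0 by ring, Real.rpow_zero]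
    have h2 : |σ₀.det|⁻¹ * |σ₀.det| = 1 := inv_mul_cancel₀ (abs_ne_zero.mpr hdet0)
    calc (2*Real.pi) ^ (-(d:ℝ)/2) * h ^ (-(d:ℝ)/2) * |σ₀.det|⁻¹ * (h ^ ((d:ℝ)/2) * |σ₀.det|)
        = (2*Real.pi) ^ (-(d:ℝ)/2) * (h ^ (-(d:ℝ)/2) * h ^ ((d:ℝ)/2))
            * (|σ₀.det|⁻¹ * |σ₀.det|) := by ring
      _ = (2*Real.pi) ^ (-(d:ℝ)/2) := by rw [h1, h2, mul_one, mul_one]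
  have hprepos : 0 < (2*Real.pi*h) ^ (-(d:ℝ)/2) * a₀.det ^ (-(1:ℝ)/2)
      * Real.exp (-(y ⬝ᵥ y)/2) := by
    have : (0:ℝ) < a₀.det := by rw [hdeta₀]; positivity
    positivity
  have hfh : |fh d h a₀ a b Ty|
      = (2*Real.pi*h) ^ (-(d:ℝ)/2) * a₀.det ^ (-(1:ℝ)/2) * Real.exp (-(y ⬝ᵥ y)/2) *
        |1 + s * (b ⬝ᵥ v) +
          (1/2) * (a * ((σ₀ᵀ)⁻¹ * (vecMulVec y y - 1) * σ₀⁻¹)ᵀ).trace| := by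
    unfold fh
    rw [hpoly, harg, abs_mul, abs_of_pos hprepos]
  rw [hfh, hdetM, hMv, aux_enorm_smul hs, mul_pow, hs3, aux_gauss_prod]
  linear_combination (h ^ ((3:ℝ)/2) * _root_.enorm (σ₀.mulVec y) ^ 3 * Real.exp (-(y ⬝ᵥ y)/2) *
    |1 + s * (b ⬝ᵥ v) +
      (1/2) * (a * ((σ₀ᵀ)⁻¹ * (vecMulVec y y - 1) * σ₀⁻¹)ᵀ).trace|) * hconst

/- continuity -/

lemma aux_continuous_mulVec (A : Matrix (Fin d) (Fin d) ℝ) :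
    Continuous fun y : Fin d → ℝ => A.mulVec y := by
  refine continuous_pi fun i => ?_
  simp only [mulVec, dotProduct]
  exact continuous_finset_sum _ fun j _ => continuous_const.mul (continuous_apply j)

lemma aux_continuous_enorm : Continuous fun y : Fin d → ℝ => _root_.enorm y := by
  unfold _root_.enorm
  exact (continuous_finset_sum _ fun i _ => (continuous_apply i).pow 2).sqrt

lemma aux_continuous_dot {α : Type*} [TopologicalSpace α] {f g : α → Fin d → ℝ}
    (hf : Continuous f) (hg : Continuous g) : Continuous fun y => f y ⬝ᵥ g y := by
  simp only [dotProduct]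
  exact continuous_finset_sum _ fun i _ =>
    ((continuous_apply i).comp hf).mul ((continuous_apply i).comp hg)

lemma aux_continuous_traceterm (a B C : Matrix (Fin d) (Fin d) ℝ) :
    Continuous fun y : Fin d → ℝ => (a * (B * (vecMulVec y y - 1) * C)ᵀ).trace := by
  simp only [Matrix.trace, Matrix.diag, Matrix.mul_apply, Matrix.transpose_apply,
    Matrix.sub_apply, Matrix.vecMulVec_apply, Matrix.one_apply, Finset.sum_mul,
    Finset.mul_sum]
  refine continuous_finset_sum _ fun i _ => continuous_finset_sum _ fun j _ =>
    continuous_finset_sum _ fun k _ => continuous_finset_sum _ fun l _ => ?_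
  fun_prop

lemma aux_continuous_C₁fun (σ₀ a : Matrix (Fin d) (Fin d) ℝ) (b : Fin d → ℝ) (h₀ : ℝ) :
    Continuous (C₁fun d σ₀ a b h₀) := by
  unfold C₁fun
  refine Continuous.mul ((aux_continuous_enorm.comp (aux_continuous_mulVec σ₀)).pow 3) ?_
  refine ((continuous_const.add (Continuous.mul continuous_const ?_)).add
    (Continuous.mul continuous_const ?_))
  · exact (aux_continuous_dot continuous_const (aux_continuous_mulVec _)).abs
  · exact (aux_continuous_traceterm a _ _).abs

lemma aux_continuous_F (a₀ a : Matrix (Fin d) (Fin d) ℝ) (b : Fin d → ℝ) (h : ℝ) :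
    Continuous fun x : Fin d → ℝ => _root_.enorm x ^ 3 * |fh d h a₀ a b x| := by
  refine Continuous.mul (aux_continuous_enorm.pow 3) (Continuous.abs ?_)
  unfold fh
  refine Continuous.mul (Continuous.mul continuous_const ?_) ?_
  · exact (Continuous.div_const (aux_continuous_dot continuous_id
      (aux_continuous_mulVec a₀⁻¹)).neg _).rexp
  · refine (continuous_const.add (aux_continuous_dot continuous_const
      (aux_continuous_mulVec a₀⁻¹))).add (Continuous.mul continuous_const ?_)
    exact aux_continuous_dot (aux_continuous_mulVec a₀⁻¹)
      ((aux_continuous_mulVec a).comp (aux_continuous_mulVec a₀⁻¹))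

end aux

/- ############ polynomial bounds ############ -/
section bnd
variable {d : ℕ}

noncomputable def Smat (A : Matrix (Fin d) (Fin d) ℝ) : ℝ := ∑ i, ∑ j, |A i j|
noncomputable def Svec (b : Fin d → ℝ) : ℝ := ∑ i, |b i|

lemma Smat_nonneg (A : Matrix (Fin d) (Fin d) ℝ) : 0 ≤ Smat A :=
  Finset.sum_nonneg fun _ _ => Finset.sum_nonneg fun _ _ => abs_nonneg _

lemma Svec_nonneg (b : Fin d → ℝ) : 0 ≤ Svec b := Finset.sum_nonneg fun _ _ => abs_nonneg _

lemma aux_trace_mul_transpose_eq (a M : Matrix (Fin d) (Fin d) ℝ) :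
    (a * Mᵀ).trace = ∑ i, ∑ j, a i j * M i j := by
  simp [Matrix.trace, Matrix.diag, Matrix.mul_apply, Matrix.transpose_apply]

variable (σ₀ a : Matrix (Fin d) (Fin d) ℝ) (b : Fin d → ℝ) (h₀ : ℝ) (y : Fin d → ℝ)

lemma aux_Qfacts : 1 ≤ ∏ i, (1 + |y i|) ∧ ∀ i, |y i| ≤ ∏ i, (1 + |y i|) := by
  have h1 : ∀ s : Finset (Fin d), (1:ℝ) ≤ ∏ i ∈ s, (1 + |y i|) := by
    intro s
    calc (1:ℝ) = ∏ _i ∈ s, 1 := (Finset.prod_const_one).symm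
      _ ≤ ∏ i ∈ s, (1 + |y i|) :=
        Finset.prod_le_prod (fun i _ => zero_le_one)
          (fun i _ => le_add_of_nonneg_right (abs_nonneg _))
  refine ⟨h1 _, fun i => ?_⟩
  rw [← Finset.mul_prod_erase Finset.univ _ (Finset.mem_univ i)]
  calc |y i| ≤ (1 + |y i|) * 1 := by linarith [abs_nonneg (y i)]
    _ ≤ (1 + |y i|) * ∏ j ∈ Finset.univ.erase i, (1 + |y j|) := by
        refine mul_le_mul_of_nonneg_left (h1 _) ?_
        positivity

lemma aux_mulVec_entry_le (A : Matrix (Fin d) (Fin d) ℝ) (i : Fin d) :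
    |A.mulVec y i| ≤ Smat A * ∏ i, (1 + |y i|) := by
  obtain ⟨hQ1, hyi⟩ := aux_Qfacts y
  set Q := ∏ i, (1 + |y i|)
  have hQ0 : (0:ℝ) ≤ Q := zero_le_one.trans hQ1
  calc |A.mulVec y i| ≤ ∑ j, |A i j * y j| := by
        simpa [mulVec, dotProduct] using Finset.abs_sum_le_sum_abs (fun j => A i j * y j) Finset.univ
    _ ≤ ∑ j, |A i j| * Q := by
        refine Finset.sum_le_sum fun j _ => ?_
        rw [abs_mul]
        exact mul_le_mul_of_nonneg_left (hyi j) (abs_nonneg _)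
    _ = (∑ j, |A i j|) * Q := (Finset.sum_mul _ _ _).symm
    _ ≤ Smat A * Q := by
        refine mul_le_mul_of_nonneg_right ?_ hQ0
        exact Finset.single_le_sum
          (f := fun i => ∑ j, |A i j|)
          (fun i _ => Finset.sum_nonneg fun j _ => abs_nonneg _) (Finset.mem_univ i)

lemma aux_enorm_mulVec_le :
    _root_.enorm (σ₀.mulVec y) ≤ Real.sqrt d * (Smat σ₀ * ∏ i, (1 + |y i|)) := by
  obtain ⟨hQ1, _⟩ := aux_Qfacts y
  set Q := ∏ i, (1 + |y i|)
  have hQ0 : (0:ℝ) ≤ Q := zero_le_one.trans hQ1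
  have hc : 0 ≤ Smat σ₀ * Q := mul_nonneg (Smat_nonneg _) hQ0
  unfold _root_.enorm
  have h1 : ∑ i, σ₀.mulVec y i ^ 2 ≤ (d : ℝ) * (Smat σ₀ * Q) ^ 2 := by
    calc ∑ i, σ₀.mulVec y i ^ 2 ≤ ∑ _i : Fin d, (Smat σ₀ * Q) ^ 2 := by
          refine Finset.sum_le_sum fun i _ => ?_
          rw [← sq_abs]
          exact pow_le_pow_left₀ (abs_nonneg _) (aux_mulVec_entry_le y σ₀ i) 2
      _ = (d : ℝ) * (Smat σ₀ * Q) ^ 2 := by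
          rw [Finset.sum_const, Finset.card_univ, Fintype.card_fin, nsmul_eq_mul]
  calc Real.sqrt (∑ i, σ₀.mulVec y i ^ 2) ≤ Real.sqrt ((d : ℝ) * (Smat σ₀ * Q) ^ 2) :=
        Real.sqrt_le_sqrt h1
    _ = Real.sqrt d * (Smat σ₀ * Q) := by
        rw [Real.sqrt_mul (Nat.cast_nonneg d), Real.sqrt_sq hc]

lemma aux_dot_le : |b ⬝ᵥ (σ₀ᵀ)⁻¹.mulVec y|
    ≤ Svec b * (Smat (σ₀ᵀ)⁻¹ * ∏ i, (1 + |y i|)) := by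
  obtain ⟨hQ1, _⟩ := aux_Qfacts y
  set Q := ∏ i, (1 + |y i|)
  calc |b ⬝ᵥ (σ₀ᵀ)⁻¹.mulVec y| ≤ ∑ i, |b i * (σ₀ᵀ)⁻¹.mulVec y i| := by
        simpa [dotProduct] using Finset.abs_sum_le_sum_abs (fun i => b i * (σ₀ᵀ)⁻¹.mulVec y i) Finset.univ
    _ ≤ ∑ i, |b i| * (Smat (σ₀ᵀ)⁻¹ * Q) := by
        refine Finset.sum_le_sum fun i _ => ?_
        rw [abs_mul]
        exact mul_le_mul_of_nonneg_left (aux_mulVec_entry_le y _ i) (abs_nonneg _)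
    _ = Svec b * (Smat (σ₀ᵀ)⁻¹ * Q) := by rw [← Finset.sum_mul]; rfl

lemma aux_trace_le (B C : Matrix (Fin d) (Fin d) ℝ) :
    |(a * (B * (vecMulVec y y - 1) * C)ᵀ).trace|
      ≤ Smat a * (Smat B * Smat C * (2 * (∏ i, (1 + |y i|)) ^ 2)) := by
  obtain ⟨hQ1, hyi⟩ := aux_Qfacts y
  set Q := ∏ i, (1 + |y i|)
  have hQ0 : (0:ℝ) ≤ Q := zero_le_one.trans hQ1
  have hQQ : (1:ℝ) ≤ Q ^ 2 := one_le_pow₀ hQ1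
  have hW : ∀ k l, |(vecMulVec y y - 1) k l| ≤ 2 * Q ^ 2 := by
    intro k l
    have h1 : |y k * y l - (1 : Matrix (Fin d) (Fin d) ℝ) k l| ≤ |y k| * |y l| + 1 := by
      refine (abs_sub _ _).trans ?_
      gcongr
      · rw [abs_mul]
      · rw [Matrix.one_apply]
        split <;> simp
    refine le_trans (by simpa [Matrix.sub_apply, Matrix.vecMulVec_apply] using h1) ?_
    have := mul_le_mul (hyi k) (hyi l) (abs_nonneg _) hQ0
    nlinarith
  have hM : ∀ i j, |(B * (vecMulVec y y - 1) * C) i j| ≤ Smat B * Smat C * (2 * Q ^ 2) := by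
    intro i j
    have hrow : ∀ k, |(B * (vecMulVec y y - 1)) i k| ≤ Smat B * (2 * Q ^ 2) := by
      intro k
      calc |(B * (vecMulVec y y - 1)) i k| ≤ ∑ l, |B i l * (vecMulVec y y - 1) l k| := by
            simpa [Matrix.mul_apply] using Finset.abs_sum_le_sum_abs (fun l => B i l * (vecMulVec y y - 1) l k) Finset.univ
        _ ≤ ∑ l, |B i l| * (2 * Q ^ 2) := by
            refine Finset.sum_le_sum fun l _ => ?_
            rw [abs_mul]
            exact mul_le_mul_of_nonneg_left (hW l k) (abs_nonneg _)
        _ = (∑ l, |B i l|) * (2 * Q ^ 2) := (Finset.sum_mul _ _ _).symm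
        _ ≤ Smat B * (2 * Q ^ 2) := by
            refine mul_le_mul_of_nonneg_right ?_ (by positivity)
            exact Finset.single_le_sum (f := fun i => ∑ l, |B i l|)
              (fun i _ => Finset.sum_nonneg fun l _ => abs_nonneg _) (Finset.mem_univ i)
    calc |(B * (vecMulVec y y - 1) * C) i j|
        ≤ ∑ k, |(B * (vecMulVec y y - 1)) i k * C k j| := by
          rw [Matrix.mul_apply]; exact Finset.abs_sum_le_sum_abs _ _
      _ ≤ ∑ k, (Smat B * (2 * Q ^ 2)) * |C k j| := by
          refine Finset.sum_le_sum fun k _ => ?_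
          rw [abs_mul]
          exact mul_le_mul_of_nonneg_right (hrow k) (abs_nonneg _)
      _ = (Smat B * (2 * Q ^ 2)) * ∑ k, |C k j| := by rw [← Finset.mul_sum]
      _ ≤ (Smat B * (2 * Q ^ 2)) * Smat C := by
          refine mul_le_mul_of_nonneg_left ?_ (mul_nonneg (Smat_nonneg B) (by positivity))
          calc ∑ k, |C k j| ≤ ∑ k, ∑ j, |C k j| := by
                refine Finset.sum_le_sum fun k _ => ?_
                exact Finset.single_le_sum (f := fun j => |C k j|)
                  (fun j _ => abs_nonneg _) (Finset.mem_univ j)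
            _ = Smat C := rfl
      _ = Smat B * Smat C * (2 * Q ^ 2) := by ring
  rw [aux_trace_mul_transpose_eq]
  calc |∑ i, ∑ j, a i j * (B * (vecMulVec y y - 1) * C) i j|
      ≤ ∑ i, ∑ j, |a i j * (B * (vecMulVec y y - 1) * C) i j| := by
        refine (Finset.abs_sum_le_sum_abs _ _).trans ?_
        exact Finset.sum_le_sum fun i _ => Finset.abs_sum_le_sum_abs _ _
    _ ≤ ∑ i, ∑ j, |a i j| * (Smat B * Smat C * (2 * Q ^ 2)) := by
        refine Finset.sum_le_sum fun i _ => Finset.sum_le_sum fun j _ => ?_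
        rw [abs_mul]
        exact mul_le_mul_of_nonneg_left (hM i j) (abs_nonneg _)
    _ = Smat a * (Smat B * Smat C * (2 * Q ^ 2)) := by
        calc ∑ i, ∑ j, |a i j| * (Smat B * Smat C * (2 * Q ^ 2))
            = (∑ i, ∑ j, |a i j|) * (Smat B * Smat C * (2 * Q ^ 2)) := by
              rw [Finset.sum_mul]
              exact Finset.sum_congr rfl fun i _ => (Finset.sum_mul _ _ _).symm
          _ = Smat a * (Smat B * Smat C * (2 * Q ^ 2)) := rfl

lemma aux_C₁fun_nonneg : 0 ≤ C₁fun d σ₀ a b h₀ y := by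
  unfold C₁fun
  have h1 : 0 ≤ _root_.enorm (σ₀.mulVec y) := Real.sqrt_nonneg _
  positivity

lemma aux_C₁fun_le :
    C₁fun d σ₀ a b h₀ y ≤
      ((Real.sqrt d * Smat σ₀) ^ 3 *
        (1 + Real.sqrt h₀ * (Svec b * Smat (σ₀ᵀ)⁻¹) + Smat a * (Smat (σ₀ᵀ)⁻¹ * Smat σ₀⁻¹)))
        * ∏ i, (1 + |y i|) ^ 5 := by
  obtain ⟨hQ1, _⟩ := aux_Qfacts y
  set Q := ∏ i, (1 + |y i|) with hQdef
  have hQ0 : (0:ℝ) ≤ Q := zero_le_one.trans hQ1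
  have hQle : Q ≤ Q ^ 2 := by nlinarith
  have hN : _root_.enorm (σ₀.mulVec y) ^ 3 ≤ (Real.sqrt d * Smat σ₀) ^ 3 * Q ^ 3 := by
    calc _root_.enorm (σ₀.mulVec y) ^ 3 ≤ (Real.sqrt d * (Smat σ₀ * Q)) ^ 3 :=
          pow_le_pow_left₀ (aux_enorm_nonneg _) (aux_enorm_mulVec_le σ₀ y) 3
      _ = (Real.sqrt d * Smat σ₀) ^ 3 * Q ^ 3 := by ring
  have e1 : Real.sqrt h₀ * |b ⬝ᵥ (σ₀ᵀ)⁻¹.mulVec y|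
      ≤ Real.sqrt h₀ * (Svec b * Smat (σ₀ᵀ)⁻¹) * Q ^ 2 := by
    have h' : |b ⬝ᵥ (σ₀ᵀ)⁻¹.mulVec y| ≤ Svec b * Smat (σ₀ᵀ)⁻¹ * Q ^ 2 := by
      refine (aux_dot_le σ₀ b y).trans ?_
      calc Svec b * (Smat (σ₀ᵀ)⁻¹ * Q) = Svec b * Smat (σ₀ᵀ)⁻¹ * Q := by ring
        _ ≤ Svec b * Smat (σ₀ᵀ)⁻¹ * Q ^ 2 := by
            refine mul_le_mul_of_nonneg_left hQle ?_
            exact mul_nonneg (Svec_nonneg b) (Smat_nonneg _)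
    calc Real.sqrt h₀ * |b ⬝ᵥ (σ₀ᵀ)⁻¹.mulVec y|
        ≤ Real.sqrt h₀ * (Svec b * Smat (σ₀ᵀ)⁻¹ * Q ^ 2) :=
          mul_le_mul_of_nonneg_left h' (Real.sqrt_nonneg _)
      _ = Real.sqrt h₀ * (Svec b * Smat (σ₀ᵀ)⁻¹) * Q ^ 2 := by ring
  have e2 : (1/2) * |(a * ((σ₀ᵀ)⁻¹ * (vecMulVec y y - 1) * σ₀⁻¹)ᵀ).trace|
      ≤ Smat a * (Smat (σ₀ᵀ)⁻¹ * Smat σ₀⁻¹) * Q ^ 2 := by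
    have := aux_trace_le a y (σ₀ᵀ)⁻¹ σ₀⁻¹
    nlinarith
  have h1Q : (1:ℝ) ≤ Q ^ 2 := one_le_pow₀ hQ1
  have hfac : 1 + Real.sqrt h₀ * |b ⬝ᵥ (σ₀ᵀ)⁻¹.mulVec y|
      + (1/2) * |(a * ((σ₀ᵀ)⁻¹ * (vecMulVec y y - 1) * σ₀⁻¹)ᵀ).trace|
      ≤ (1 + Real.sqrt h₀ * (Svec b * Smat (σ₀ᵀ)⁻¹)
          + Smat a * (Smat (σ₀ᵀ)⁻¹ * Smat σ₀⁻¹)) * Q ^ 2 := by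
    have hx : (1 + Real.sqrt h₀ * (Svec b * Smat (σ₀ᵀ)⁻¹)
        + Smat a * (Smat (σ₀ᵀ)⁻¹ * Smat σ₀⁻¹)) * Q ^ 2
        = Q ^ 2 + Real.sqrt h₀ * (Svec b * Smat (σ₀ᵀ)⁻¹) * Q ^ 2
          + Smat a * (Smat (σ₀ᵀ)⁻¹ * Smat σ₀⁻¹) * Q ^ 2 := by ring
    rw [hx]
    linarith
  have hfacpos : 0 ≤ 1 + Real.sqrt h₀ * |b ⬝ᵥ (σ₀ᵀ)⁻¹.mulVec y|
      + (1/2) * |(a * ((σ₀ᵀ)⁻¹ * (vecMulVec y y - 1) * σ₀⁻¹)ᵀ).trace| := by positivity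
  unfold C₁fun
  calc _root_.enorm (σ₀.mulVec y) ^ 3 * (1 + Real.sqrt h₀ * |b ⬝ᵥ (σ₀ᵀ)⁻¹.mulVec y|
        + (1/2) * |(a * ((σ₀ᵀ)⁻¹ * (vecMulVec y y - 1) * σ₀⁻¹)ᵀ).trace|)
      ≤ ((Real.sqrt d * Smat σ₀) ^ 3 * Q ^ 3) *
        ((1 + Real.sqrt h₀ * (Svec b * Smat (σ₀ᵀ)⁻¹)
          + Smat a * (Smat (σ₀ᵀ)⁻¹ * Smat σ₀⁻¹)) * Q ^ 2) := by
        refine mul_le_mul hN hfac hfacpos ?_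
        exact mul_nonneg (pow_nonneg (mul_nonneg (Real.sqrt_nonneg _) (Smat_nonneg _)) 3)
          (pow_nonneg hQ0 3)
    _ = ((Real.sqrt d * Smat σ₀) ^ 3 *
        (1 + Real.sqrt h₀ * (Svec b * Smat (σ₀ᵀ)⁻¹)
          + Smat a * (Smat (σ₀ᵀ)⁻¹ * Smat σ₀⁻¹))) * Q ^ 5 := by ring
    _ = _ := by rw [hQdef, ← Finset.prod_pow]

end bnd

open ProbabilityTheory in
lemma aux_int1d : Integrable (fun t : ℝ => (1 + |t|) ^ 5 * gaussianPDFReal 0 1 t) volume := by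
  have hpdf : ∀ t : ℝ, gaussianPDFReal 0 1 t
      = (Real.sqrt (2 * Real.pi))⁻¹ * Real.exp (-(2⁻¹) * t ^ 2) := by
    intro t
    have : -(t ^ 2) / 2 = -(2⁻¹) * t ^ 2 := by ring
    simp [gaussianPDFReal, this]
  have i1 : Integrable (fun t : ℝ => Real.exp (-(2⁻¹) * t ^ 2)) volume :=
    integrable_exp_neg_mul_sq (by norm_num)
  have i2 : Integrable (fun t : ℝ => t ^ 5 * Real.exp (-(2⁻¹) * t ^ 2)) volume := by
    have h5 := integrable_rpow_mul_exp_neg_mul_sq (b := 2⁻¹) (by norm_num) (s := 5)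
      (by norm_num)
    have heq : (fun t : ℝ => t ^ (5:ℝ) * Real.exp (-(2⁻¹) * t ^ 2))
        = fun t : ℝ => t ^ 5 * Real.exp (-(2⁻¹) * t ^ 2) := by
      funext t
      rw [show (5:ℝ) = ((5:ℕ):ℝ) by norm_num, Real.rpow_natCast]
    rwa [heq] at h5
  have hmaj : Integrable (fun t : ℝ =>
      (Real.sqrt (2 * Real.pi))⁻¹ * (16 * Real.exp (-(2⁻¹) * t ^ 2))
        + (Real.sqrt (2 * Real.pi))⁻¹ * (16 * |t ^ 5 * Real.exp (-(2⁻¹) * t ^ 2)|))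
      volume := by
    exact ((i1.const_mul 16).const_mul _).add (((i2.abs).const_mul 16).const_mul _)
  refine hmaj.mono' ?_ (Filter.Eventually.of_forall fun t => ?_)
  · have hgc : Continuous (gaussianPDFReal 0 1) := by
      unfold gaussianPDFReal
      fun_prop
    exact ((continuous_const.add continuous_abs).pow 5 |>.mul hgc).aestronglyMeasurable
  · rw [hpdf t, Real.norm_eq_abs]
    have h1 : |t ^ 5 * Real.exp (-(2⁻¹) * t ^ 2)| = |t| ^ 5 * Real.exp (-(2⁻¹) * t ^ 2) := by
      rw [abs_mul, abs_pow, abs_of_pos (Real.exp_pos _)]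
    have h2 : (1 + |t|) ^ 5 ≤ 16 * (1 + |t| ^ 5) := by
      have hu : 0 ≤ |t| := abs_nonneg t
      set u := |t|
      nlinarith [sq_nonneg (u-1), sq_nonneg (u^2-1), sq_nonneg (u^2-u), sq_nonneg (u+1),
        mul_nonneg hu hu, mul_nonneg (mul_nonneg hu hu) hu, sq_nonneg (u^2+u-2),
        mul_nonneg (mul_nonneg hu hu) (sq_nonneg (u-1)), mul_nonneg hu (sq_nonneg (u-1)),
        mul_nonneg hu (sq_nonneg (u^2-1)), mul_nonneg hu (sq_nonneg (u^2-u))]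
    rw [h1]
    have h3 : 0 ≤ (Real.sqrt (2 * Real.pi))⁻¹ := by positivity
    calc |(1 + |t|) ^ 5 * ((Real.sqrt (2 * Real.pi))⁻¹ * Real.exp (-(2⁻¹) * t ^ 2))|
        = (1 + |t|) ^ 5 * ((Real.sqrt (2 * Real.pi))⁻¹ * Real.exp (-(2⁻¹) * t ^ 2)) := by
          refine abs_of_nonneg ?_
          have : (0:ℝ) ≤ (1 + |t|) ^ 5 := by positivity
          positivity
      _ ≤ (16 * (1 + |t| ^ 5)) * ((Real.sqrt (2 * Real.pi))⁻¹ * Real.exp (-(2⁻¹) * t ^ 2)) := by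
          refine mul_le_mul_of_nonneg_right h2 ?_
          positivity
      _ = (Real.sqrt (2 * Real.pi))⁻¹ * (16 * Real.exp (-(2⁻¹) * t ^ 2))
          + (Real.sqrt (2 * Real.pi))⁻¹ * (16 * (|t| ^ 5 * Real.exp (-(2⁻¹) * t ^ 2))) := by
          ring


open ProbabilityTheory ENNReal in
/-- For every `h₀ > 0`, the constant `C₁ := E[|σ₀N|³(1 + √h₀ |b·((σ₀ᵀ)⁻¹N)|
+ (1/2)|a·((σ₀ᵀ)⁻¹(NNᵀ − I_d)σ₀⁻¹)|)]` (with `N` standard Gaussian in `ℝ^d`) is finite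
(the integrand is integrable), it does not depend on `h`, and
`∫_{ℝ^d} |x|³ |f_h(x)| dx ≤ C₁ h^{3/2}` for every `0 < h ≤ h₀`. -/
theorem stmt7 (d : ℕ) (hd : 1 ≤ d)
    (σ₀ : Matrix (Fin d) (Fin d) ℝ) (hσ₀ : IsUnit σ₀)
    (a₀ a : Matrix (Fin d) (Fin d) ℝ) (ha₀ : a₀ = σ₀ * σ₀ᵀ)
    (ha : a.PosSemidef) (b : Fin d → ℝ)
    (h₀ : ℝ) (hh₀ : 0 < h₀) :
    Integrable (C₁fun d σ₀ a b h₀) (stdGaussianPi d) ∧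
      ∀ h : ℝ, 0 < h → h ≤ h₀ →
        ∫ x : Fin d → ℝ, _root_.enorm x ^ 3 * |fh d h a₀ a b x| ≤
          (∫ y : Fin d → ℝ, C₁fun d σ₀ a b h₀ y ∂stdGaussianPi d) * h ^ ((3 : ℝ) / 2) := by
  have hγeq := aux_stdGaussianPi_eq d
  have hGmeas : Measurable fun y : Fin d → ℝ => ∏ i, gaussianPDF 0 1 (y i) :=
    Finset.measurable_prod _ fun i _ => (measurable_gaussianPDF 0 1).comp (measurable_pi_apply i)
  have hGlt : ∀ᵐ y ∂(volume : Measure (Fin d → ℝ)), (∏ i, gaussianPDF 0 1 (y i)) < ⊤ := by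
    refine Filter.Eventually.of_forall fun y => ENNReal.prod_lt_top fun i _ => ?_
    rw [gaussianPDF_def]
    exact ENNReal.ofReal_lt_top
  have hGto : ∀ y : Fin d → ℝ, (∏ i, gaussianPDF 0 1 (y i)).toReal
      = ∏ i, gaussianPDFReal 0 1 (y i) := by
    intro y
    rw [ENNReal.toReal_prod]
    exact Finset.prod_congr rfl fun i _ => by
      rw [gaussianPDF_def, ENNReal.toReal_ofReal (gaussianPDFReal_nonneg _ _ _)]
  have hgc : Continuous (gaussianPDFReal 0 1) := by
    unfold gaussianPDFReal
    fun_prop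
  -- Part 1 : integrability
  have hint : Integrable (C₁fun d σ₀ a b h₀) (stdGaussianPi d) := by
    rw [hγeq, integrable_withDensity_iff hGmeas hGlt]
    set K := ((Real.sqrt d * Smat σ₀) ^ 3 *
      (1 + Real.sqrt h₀ * (Svec b * Smat (σ₀ᵀ)⁻¹) + Smat a * (Smat (σ₀ᵀ)⁻¹ * Smat σ₀⁻¹)))
      with hK
    have hmajInt : Integrable (fun y : Fin d → ℝ =>
        K * ∏ i, ((1 + |y i|) ^ 5 * gaussianPDFReal 0 1 (y i))) volume :=
      (Integrable.fintype_prod (𝕜 := ℝ)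
        (f := fun (_ : Fin d) t => (1 + |t|) ^ 5 * gaussianPDFReal 0 1 t)
        fun _ => aux_int1d).const_mul K
    refine hmajInt.mono' ?_ (Filter.Eventually.of_forall fun y => ?_)
    · have hc2 : Continuous fun y : Fin d → ℝ => ∏ i, gaussianPDFReal 0 1 (y i) :=
        continuous_finset_prod _ fun i _ => hgc.comp (continuous_apply i)
      have heqf : (fun y : Fin d → ℝ =>
            C₁fun d σ₀ a b h₀ y * (∏ i, gaussianPDF 0 1 (y i)).toReal)
          = fun y => C₁fun d σ₀ a b h₀ y * ∏ i, gaussianPDFReal 0 1 (y i) := by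
        funext y; rw [hGto]
      rw [heqf]
      exact ((aux_continuous_C₁fun σ₀ a b h₀).mul hc2).aestronglyMeasurable
    · rw [hGto, Real.norm_eq_abs]
      have hg0 : 0 ≤ ∏ i, gaussianPDFReal 0 1 (y i) :=
        Finset.prod_nonneg fun i _ => gaussianPDFReal_nonneg _ _ _
      rw [abs_of_nonneg (mul_nonneg (aux_C₁fun_nonneg σ₀ a b h₀ y) hg0)]
      calc C₁fun d σ₀ a b h₀ y * ∏ i, gaussianPDFReal 0 1 (y i)
          ≤ (K * ∏ i, (1 + |y i|) ^ 5) * ∏ i, gaussianPDFReal 0 1 (y i) :=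
            mul_le_mul_of_nonneg_right (aux_C₁fun_le σ₀ a b h₀ y) hg0
        _ = K * ∏ i, ((1 + |y i|) ^ 5 * gaussianPDFReal 0 1 (y i)) := by
            rw [Finset.prod_mul_distrib]; ring
  refine ⟨hint, fun h hh hhle => ?_⟩
  -- Part 2 : the bound
  have hdet0 : σ₀.det ≠ 0 := ((Matrix.isUnit_iff_isUnit_det σ₀).mp hσ₀).ne_zero
  have hs0 : 0 < Real.sqrt h := Real.sqrt_pos.mpr hh
  set M := Real.sqrt h • σ₀ with hM_def
  have hMdet : M.det ≠ 0 := by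
    rw [hM_def, Matrix.det_smul]
    exact mul_ne_zero (pow_ne_zero _ hs0.ne') hdet0
  set F := fun x : Fin d → ℝ => _root_.enorm x ^ 3 * |fh d h a₀ a b x| with hF_def
  have hFc : Continuous F := aux_continuous_F a₀ a b h
  have hF0 : ∀ x, 0 ≤ F x := fun x =>
    mul_nonneg (pow_nonneg (aux_enorm_nonneg x) 3) (abs_nonneg _)
  have hCc := aux_continuous_C₁fun σ₀ a b h₀ (d := d)
  have hg0 : ∀ y : Fin d → ℝ, 0 ≤ ∏ i, gaussianPDFReal 0 1 (y i) := fun y =>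
    Finset.prod_nonneg fun i _ => gaussianPDFReal_nonneg _ _ _
  -- pointwise bound
  have hkey : ∀ y : Fin d → ℝ, |M.det| * F (M.mulVec y)
      ≤ h ^ ((3:ℝ)/2) * ((∏ i, gaussianPDFReal 0 1 (y i)) * C₁fun d σ₀ a b h₀ y) := by
    intro y
    have heq := aux_key_eq σ₀ a₀ a hσ₀ ha₀ b hh y
    refine le_trans (le_of_eq heq) ?_
    unfold C₁fun
    have habs : |1 + Real.sqrt h * (b ⬝ᵥ (σ₀ᵀ)⁻¹.mulVec y) +
          (1/2) * (a * ((σ₀ᵀ)⁻¹ * (vecMulVec y y - 1) * σ₀⁻¹)ᵀ).trace|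
        ≤ 1 + Real.sqrt h₀ * |b ⬝ᵥ (σ₀ᵀ)⁻¹.mulVec y| +
          (1/2) * |(a * ((σ₀ᵀ)⁻¹ * (vecMulVec y y - 1) * σ₀⁻¹)ᵀ).trace| := by
      have t1 := abs_add_le (1 + Real.sqrt h * (b ⬝ᵥ (σ₀ᵀ)⁻¹.mulVec y))
        ((1/2) * (a * ((σ₀ᵀ)⁻¹ * (vecMulVec y y - 1) * σ₀⁻¹)ᵀ).trace)
      have t2 := abs_add_le (1:ℝ) (Real.sqrt h * (b ⬝ᵥ (σ₀ᵀ)⁻¹.mulVec y))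
      rw [abs_one] at t2
      have t3 : |Real.sqrt h * (b ⬝ᵥ (σ₀ᵀ)⁻¹.mulVec y)|
          = Real.sqrt h * |b ⬝ᵥ (σ₀ᵀ)⁻¹.mulVec y| := by
        rw [abs_mul, abs_of_nonneg hs0.le]
      have t4 : Real.sqrt h * |b ⬝ᵥ (σ₀ᵀ)⁻¹.mulVec y|
          ≤ Real.sqrt h₀ * |b ⬝ᵥ (σ₀ᵀ)⁻¹.mulVec y| :=
        mul_le_mul_of_nonneg_right (Real.sqrt_le_sqrt hhle) (abs_nonneg _)
      have t5 : |(1/2) * (a * ((σ₀ᵀ)⁻¹ * (vecMulVec y y - 1) * σ₀⁻¹)ᵀ).trace|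
          = (1/2) * |(a * ((σ₀ᵀ)⁻¹ * (vecMulVec y y - 1) * σ₀⁻¹)ᵀ).trace| := by
        rw [abs_mul]; norm_num
      linarith
    refine mul_le_mul_of_nonneg_left ?_ (Real.rpow_nonneg hh.le _)
    refine mul_le_mul_of_nonneg_left ?_ (hg0 y)
    exact mul_le_mul_of_nonneg_left habs (pow_nonneg (aux_enorm_nonneg _) 3)
  -- change of variables
  have hFof : Measurable fun x : Fin d → ℝ => ENNReal.ofReal (F x) :=
    hFc.measurable.ennreal_ofReal
  have hmap := Real.map_matrix_volume_pi_eq_smul_volume_pi (M := M) hMdet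
  have step1 : ∫⁻ x, ENNReal.ofReal (F x)
      = ENNReal.ofReal |M.det| * ∫⁻ y, ENNReal.ofReal (F (M.mulVec y)) := by
    have hTmeas : Measurable (⇑(Matrix.toLin' M)) :=
      (Matrix.toLin' M).continuous_on_pi.measurable
    have hlm : ∫⁻ y, ENNReal.ofReal (F ((Matrix.toLin' M) y)) ∂volume
        = ∫⁻ x, ENNReal.ofReal (F x) ∂(Measure.map (⇑(Matrix.toLin' M)) volume) :=
      (lintegral_map hFof hTmeas).symm
    rw [hmap, lintegral_smul_measure, smul_eq_mul] at hlm
    have h2 : ENNReal.ofReal |M.det| * ENNReal.ofReal |M.det⁻¹| = 1 := by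
      rw [← ENNReal.ofReal_mul (abs_nonneg _), abs_inv,
        mul_inv_cancel₀ (abs_ne_zero.mpr hMdet), ENNReal.ofReal_one]
    calc ∫⁻ x, ENNReal.ofReal (F x)
        = (ENNReal.ofReal |M.det| * ENNReal.ofReal |M.det⁻¹|) * ∫⁻ x, ENNReal.ofReal (F x) := by
          rw [h2, one_mul]
      _ = ENNReal.ofReal |M.det| * ∫⁻ y, ENNReal.ofReal (F ((Matrix.toLin' M) y)) := by
          rw [mul_assoc, ← hlm]
      _ = ENNReal.ofReal |M.det| * ∫⁻ y, ENNReal.ofReal (F (M.mulVec y)) := by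
          simp_rw [Matrix.toLin'_apply]
  have hCof : Measurable fun y : Fin d → ℝ => ENNReal.ofReal (C₁fun d σ₀ a b h₀ y) :=
    hCc.measurable.ennreal_ofReal
  have step2 : ENNReal.ofReal |M.det| * ∫⁻ y, ENNReal.ofReal (F (M.mulVec y))
      ≤ ENNReal.ofReal (h ^ ((3:ℝ)/2)) *
        ∫⁻ y, ENNReal.ofReal (C₁fun d σ₀ a b h₀ y) ∂(stdGaussianPi d) := by
    rw [← lintegral_const_mul' _ _ ENNReal.ofReal_ne_top]
    have hle : ∀ y : Fin d → ℝ, ENNReal.ofReal |M.det| * ENNReal.ofReal (F (M.mulVec y))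
        ≤ ENNReal.ofReal (h ^ ((3:ℝ)/2)) *
          ((∏ i, gaussianPDF 0 1 (y i)) * ENNReal.ofReal (C₁fun d σ₀ a b h₀ y)) := by
      intro y
      rw [← ENNReal.ofReal_mul (abs_nonneg _)]
      refine le_trans (ENNReal.ofReal_le_ofReal (hkey y)) ?_
      rw [ENNReal.ofReal_mul (Real.rpow_nonneg hh.le _), ENNReal.ofReal_mul (hg0 y),
        ENNReal.ofReal_prod_of_nonneg (fun i _ => gaussianPDFReal_nonneg _ _ _)]
      simp_rw [gaussianPDF_def]
      exact le_refl _
    refine le_trans (lintegral_mono hle) ?_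
    rw [lintegral_const_mul' _ _ ENNReal.ofReal_ne_top]
    refine mul_le_mul_right (le_of_eq ?_) _
    rw [hγeq, lintegral_withDensity_eq_lintegral_mul volume hGmeas hCof]
    rfl
  -- final conversion
  have hJlt : (∫⁻ y, ENNReal.ofReal (C₁fun d σ₀ a b h₀ y) ∂(stdGaussianPi d)) < ⊤ :=
    hint.lintegral_lt_top
  rw [integral_eq_lintegral_of_nonneg_ae (Filter.Eventually.of_forall hF0)
      hFc.aestronglyMeasurable,
    integral_eq_lintegral_of_nonneg_ae
      (Filter.Eventually.of_forall (aux_C₁fun_nonneg σ₀ a b h₀)) hCc.aestronglyMeasurable]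
  have hfinal : ∫⁻ x, ENNReal.ofReal (F x)
      ≤ ENNReal.ofReal (h ^ ((3:ℝ)/2)) *
        ∫⁻ y, ENNReal.ofReal (C₁fun d σ₀ a b h₀ y) ∂(stdGaussianPi d) := step1 ▸ step2
  calc (∫⁻ x, ENNReal.ofReal (F x)).toReal
      ≤ (ENNReal.ofReal (h ^ ((3:ℝ)/2)) *
          ∫⁻ y, ENNReal.ofReal (C₁fun d σ₀ a b h₀ y) ∂(stdGaussianPi d)).toReal :=
        ENNReal.toReal_mono (ENNReal.mul_ne_top ENNReal.ofReal_ne_top hJlt.ne) hfinal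
    _ = h ^ ((3:ℝ)/2) *
          (∫⁻ y, ENNReal.ofReal (C₁fun d σ₀ a b h₀ y) ∂(stdGaussianPi d)).toReal := by
        rw [ENNReal.toReal_mul, ENNReal.toReal_ofReal (Real.rpow_nonneg hh.le _)]
    _ = _ := mul_comm _ _
end

section
/- Assume m > −∞ and 1 − (1/2) a·a₀⁻¹ + h·m ≥ 0, so that f_h is a probability density on ℝ^d. Then the matrix (a + a₀) − h b bᵀ is positive definite; that is, vᵀ (a + a₀) v > h (b·v)² for every nonzero v ∈ ℝ^d. -/
open MeasureTheory Matrix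

theorem Matrix.posSemidef_iff_eq_transpose_mul_self {n : Type*} [Fintype n] [DecidableEq n]
    {A : Matrix n n ℝ} : A.PosSemidef ↔ ∃ B : Matrix n n ℝ, A = Bᴴ * B := by
  open scoped MatrixOrder in
  exact ⟨fun hA => CStarAlgebra.nonneg_iff_eq_star_mul_self.mp hA.nonneg,
    fun ⟨B, hB⟩ => hB ▸ Matrix.posSemidef_conjTranspose_mul_self B⟩

lemma quad_le_trace_mul {d : ℕ} {A : Matrix (Fin d) (Fin d) ℝ} (hA : A.PosSemidef)
    (u : Fin d → ℝ) : u ⬝ᵥ A.mulVec u ≤ A.trace * (u ⬝ᵥ u) := by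
  obtain ⟨B, rfl⟩ := Matrix.posSemidef_iff_eq_transpose_mul_self.mp hA
  have h1 : u ⬝ᵥ (Bᴴ * B).mulVec u = (B.mulVec u) ⬝ᵥ (B.mulVec u) := by
    rw [← Matrix.mulVec_mulVec, Matrix.dotProduct_mulVec]
    congr 1
    have : Bᴴ = Bᵀ := by
      ext i j; simp [Matrix.conjTranspose_apply]
    rw [this, Matrix.vecMul_transpose]
  have h2 : (Bᴴ * B).trace = ∑ j, ∑ i, B i j ^ 2 := by
    rw [Matrix.trace]
    simp [Matrix.diag, Matrix.mul_apply, Matrix.conjTranspose_apply, sq]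
  rw [h1, h2]
  have h3 : (B.mulVec u) ⬝ᵥ (B.mulVec u) = ∑ i, (∑ j, B i j * u j) ^ 2 := by
    simp [dotProduct, Matrix.mulVec, sq]
  rw [h3, Finset.sum_comm, Finset.sum_mul]
  refine Finset.sum_le_sum fun i _ => ?_
  have := Finset.sum_mul_sq_le_sq_mul_sq Finset.univ (fun j => B i j) u
  calc (∑ j, B i j * u j) ^ 2 ≤ (∑ j, B i j ^ 2) * ∑ j, u j ^ 2 := this
  _ = (∑ j, B i j ^ 2) * (u ⬝ᵥ u) := by simp [dotProduct, sq]

/-- Assume `m := inf_w ((1/2) wᵀ a w + b·w) > −∞` and `1 − (1/2) a·a₀⁻¹ + h·m ≥ 0`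
(so that `f_h` is a probability density on `ℝ^d`). Then the matrix `(a + a₀) − h b bᵀ` is
positive definite: `vᵀ (a + a₀) v > h (b·v)²` for every nonzero `v ∈ ℝ^d`. -/
theorem stmt9 (d : ℕ) (hd : 1 ≤ d) (h : ℝ) (hh : 0 < h)
    (σ₀ : Matrix (Fin d) (Fin d) ℝ) (hσ₀ : IsUnit σ₀)
    (a₀ a : Matrix (Fin d) (Fin d) ℝ) (ha₀ : a₀ = σ₀ * σ₀ᵀ)
    (ha : a.PosSemidef) (b : Fin d → ℝ)
    (hbdd : BddBelow (Set.range fun w : Fin d → ℝ =>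
      (1 / 2) * (w ⬝ᵥ a.mulVec w) + b ⬝ᵥ w))
    (hpos : 0 ≤ 1 - (1 / 2) * (a * a₀⁻¹ᵀ).trace +
      h * (⨅ w : Fin d → ℝ, ((1 / 2) * (w ⬝ᵥ a.mulVec w) + b ⬝ᵥ w))) :
    ∀ v : Fin d → ℝ, v ≠ 0 → h * (b ⬝ᵥ v) ^ 2 < v ⬝ᵥ (a + a₀).mulVec v := by
  intro v hv
  set m := ⨅ w : Fin d → ℝ, ((1 / 2) * (w ⬝ᵥ a.mulVec w) + b ⬝ᵥ w) with hm_def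
  have hmle : ∀ w : Fin d → ℝ, m ≤ (1 / 2) * (w ⬝ᵥ a.mulVec w) + b ⬝ᵥ w :=
    fun w => ciInf_le hbdd w
  set Q := v ⬝ᵥ a.mulVec v with hQdef
  have hQ0 : 0 ≤ Q := by simpa using ha.dotProduct_mulVec_nonneg v
  -- scaling inequality
  have hscale : ∀ t : ℝ, m ≤ (1 / 2) * (t ^ 2 * Q) + t * (b ⬝ᵥ v) := by
    intro t
    have e1 : (t • v) ⬝ᵥ a.mulVec (t • v) = t ^ 2 * Q := by
      rw [Matrix.mulVec_smul, dotProduct_smul, smul_dotProduct,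
        smul_eq_mul, smul_eq_mul]; ring
    have e2 : b ⬝ᵥ (t • v) = t * (b ⬝ᵥ v) := by
      rw [dotProduct_smul, smul_eq_mul]
    have := hmle (t • v)
    rw [e1, e2] at this
    exact this
  -- (b·v)^2 ≤ 2(-m)Q
  have hbv : (b ⬝ᵥ v) ^ 2 ≤ 2 * (-m) * Q := by
    by_cases hQ : Q = 0
    · have hbv0 : b ⬝ᵥ v = 0 := by
        by_contra hne
        have := hscale ((m - 1) / (b ⬝ᵥ v))
        rw [hQ] at this
        rw [div_mul_cancel₀ _ hne] at this
        linarith [this]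
      rw [hbv0, hQ]; norm_num
    · have hQpos : 0 < Q := lt_of_le_of_ne hQ0 (Ne.symm hQ)
      have := hscale (-(b ⬝ᵥ v) / Q)
      have e : (1 / 2) * ((-(b ⬝ᵥ v) / Q) ^ 2 * Q) + (-(b ⬝ᵥ v) / Q) * (b ⬝ᵥ v)
          = -(b ⬝ᵥ v) ^ 2 / (2 * Q) := by
        field_simp; ring
      rw [e] at this
      rw [le_div_iff₀ (by positivity)] at this
      nlinarith [this]
  -- matrix algebra
  have hdet : IsUnit σ₀.det := (Matrix.isUnit_iff_isUnit_det σ₀).mp hσ₀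
  have hS1 : σ₀ * σ₀⁻¹ = 1 := Matrix.mul_nonsing_inv _ hdet
  have hS2 : σ₀⁻¹ * σ₀ = 1 := Matrix.nonsing_inv_mul _ hdet
  set A := σ₀⁻¹ * a * (σ₀⁻¹)ᵀ with hAdef
  have hTH : (σ₀⁻¹)ᴴ = (σ₀⁻¹)ᵀ := by
    ext i j; simp [Matrix.conjTranspose_apply]
  have hAconj : A = σ₀⁻¹ * a * (σ₀⁻¹)ᴴ := by
    rw [hAdef, hTH]
  have hAps : A.PosSemidef := by
    rw [hAconj]; exact ha.mul_mul_conjTranspose_same σ₀⁻¹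
  have hinv : a₀⁻¹ = (σ₀⁻¹)ᵀ * σ₀⁻¹ := by
    rw [ha₀, Matrix.mul_inv_rev, ← Matrix.transpose_nonsing_inv]
  have hinvT : a₀⁻¹ᵀ = a₀⁻¹ := by
    have hsym : a₀ᵀ = a₀ := by rw [ha₀]; simp [Matrix.transpose_mul]
    rw [Matrix.transpose_nonsing_inv, hsym]
  set t := (a * a₀⁻¹ᵀ).trace with htdef
  have htrace : t = A.trace := by
    rw [htdef, hinvT, hinv, ← Matrix.mul_assoc, Matrix.trace_mul_comm, hAdef]
    rw [Matrix.mul_assoc]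
  -- u := σ₀ᵀ v
  set u := σ₀ᵀ.mulVec v with hudef
  have hu_dot : ∀ N : Matrix (Fin d) (Fin d) ℝ, u ⬝ᵥ N.mulVec u
      = v ⬝ᵥ (σ₀ * N * σ₀ᵀ).mulVec v := by
    intro N
    rw [hudef, Matrix.mulVec_mulVec, Matrix.mulVec_transpose,
      ← Matrix.dotProduct_mulVec, Matrix.mulVec_mulVec, ← Matrix.mul_assoc]
  have huA : u ⬝ᵥ A.mulVec u = Q := by
    rw [hu_dot A, hQdef]
    have key : σ₀ * A * σ₀ᵀ = a := by
      rw [hAdef]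
      calc σ₀ * (σ₀⁻¹ * a * (σ₀⁻¹)ᵀ) * σ₀ᵀ
          = (σ₀ * σ₀⁻¹) * a * ((σ₀⁻¹)ᵀ * σ₀ᵀ) := by
            simp only [Matrix.mul_assoc]
        _ = a := by rw [hS1, ← Matrix.transpose_mul, hS1]; simp
    rw [key]
  set P := v ⬝ᵥ a₀.mulVec v with hPdef
  have huu : u ⬝ᵥ u = P := by
    have := hu_dot 1
    rw [Matrix.mul_one] at this
    simpa [hPdef, ha₀] using this
  have hune : u ≠ 0 := by
    intro h0
    apply hv
    have : (σ₀ᵀ)⁻¹.mulVec u = v := by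
      rw [hudef, Matrix.mulVec_mulVec, Matrix.nonsing_inv_mul _ (by
        simpa [Matrix.det_transpose] using hdet)]
      simp
    rw [← this, h0, Matrix.mulVec_zero]
  have hP : 0 < P := by
    rw [← huu]
    rcases (dotProduct_self_eq_zero (v := u)).not.mpr hune with hne
    have hnn : 0 ≤ u ⬝ᵥ u := Finset.sum_nonneg fun i _ => mul_self_nonneg _
    exact lt_of_le_of_ne hnn (Ne.symm hne)
  -- Q ≤ t * P
  have hQt : Q ≤ t * P := by
    rw [← huA, ← huu, htrace]
    exact quad_le_trace_mul hAps u
  have ht0 : 0 ≤ t := by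
    rw [htrace]
    obtain ⟨B, hB⟩ := Matrix.posSemidef_iff_eq_transpose_mul_self.mp hAps
    rw [hB, Matrix.trace]
    refine Finset.sum_nonneg fun j _ => ?_
    have : (Bᴴ * B).diag j = ∑ i, B i j * B i j := by
      simp [Matrix.diag, Matrix.mul_apply, Matrix.conjTranspose_apply]
    rw [this]
    exact Finset.sum_nonneg fun i _ => mul_self_nonneg _
  -- from hpos : h*(-m) ≤ 1 - t/2
  have hmh : 0 ≤ 1 - (1 / 2) * t + h * m := hpos
  -- goal
  have hgoal : v ⬝ᵥ (a + a₀).mulVec v = Q + P := by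
    rw [Matrix.add_mulVec, dotProduct_add]
  rw [hgoal]
  have s1 : h * (b ⬝ᵥ v) ^ 2 ≤ (2 - t) * Q := by
    have c1 : h * (b ⬝ᵥ v) ^ 2 ≤ h * (2 * (-m) * Q) :=
      mul_le_mul_of_nonneg_left hbv hh.le
    have c2 : h * (2 * (-m) * Q) ≤ (2 - t) * Q := by
      have : 0 ≤ (2 - t + 2 * h * m) * Q :=
        mul_nonneg (by linarith) hQ0
      nlinarith [this]
    linarith
  have s2 : (2 - t) * Q < Q + P := by
    rcases le_or_gt t 1 with hle | hlt
    · have c3 : (1 - t) * Q ≤ (1 - t) * (t * P) :=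
        mul_le_mul_of_nonneg_left hQt (by linarith)
      nlinarith [sq_nonneg (1 - 2 * t), hP]
    · have c4 : 0 ≤ (t - 1) * Q := mul_nonneg (by linarith) hQ0
      nlinarith
  linarith
end
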